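/- For a tree-like multiset t over F and any non-root element f of the support of flat_F(t), there is a unique element p in the support of flat_F(t) such that the tree-like multiset induced by f (the unique ingredient with root f) is either directly in the domain of the multiset induced by p, or is in the domain of a group ingredient that is in the domain of the multiset induced by p. Hence the parent function is well-defined. -/

import Mathlib

namespace CFDPaper

noncomputable section

attribute [local instance] Classical.decEq
attribute [local instance] Classical.propDecidable

/-- Depth-indexed hereditary finite multisets: `HMd A n` models the class `M_{n+1}(A)`
of the cumulative hierarchy of finite multisets over the urelements `A`. -/
@[reducible] def HMd (A : Type) : ℕ → Type
  | 0 => Multiset A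
  | n + 1 => Multiset (A ⊕ HMd A n)

variable {A B F : Type}

instance instAddHMd (A : Type) (n : ℕ) : Add (HMd A n) :=
  match n with
  | 0 => inferInstanceAs (Add (Multiset A))
  | n + 1 => inferInstanceAs (Add (Multiset (A ⊕ HMd A n)))

/-- The canonical inclusion `M_{n+1}(A) ⊆ M_{n+2}(A)`. -/
def HMd.up : ∀ n : ℕ, HMd A n → HMd A (n + 1)
  | 0, m => ((m : Multiset A).map (Sum.inl : A → A ⊕ HMd A 0) : Multiset (A ⊕ HMd A 0))
  | n + 1, m => ((m : Multiset (A ⊕ HMd A n)).map (Sum.map id (HMd.up n)) :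
      Multiset (A ⊕ HMd A (n + 1)))

/-- Iterated inclusion along `k ≤ n`. -/
def HMd.liftLe {k n : ℕ} (h : k ≤ n) (m : HMd A k) : HMd A n :=
  Nat.leRecOn h (fun {i} x => HMd.up i x) m

/-- `m` (living at some level of the hierarchy) already appears at level `r`. -/
def comesFrom (r : ℕ) (m : Σ n, HMd A n) : Prop :=
  ∃ (h : r ≤ m.1) (x : HMd A r), HMd.liftLe h x = m.2

/-- The rank of a hereditary multiset: least level of the hierarchy where it occurs
(`rank m = r` corresponds to paper-rank `r + 1`). -/
def rank (m : Σ n, HMd A n) : ℕ := sInf {r | comesFrom r m}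

/-- Equality of hereditary multisets living at different levels, via lifting. -/
def hmEq {k n : ℕ} (x : HMd A k) (y : HMd A n) : Prop :=
  HMd.liftLe (le_max_left k n) x = HMd.liftLe (le_max_right k n) y

/-- Membership of a multiset in the domain (support) of a higher-level multiset. -/
def HMd.Memb {n : ℕ} (x : HMd A n) (m : HMd A (n + 1)) : Prop :=
  Sum.inr x ∈ (m : Multiset (A ⊕ HMd A n))

/-- The flattening function: flat multiplicity of each urelement. -/
def HMd.flat : ∀ {n : ℕ}, HMd A n → Multiset A
  | 0, m => (m : Multiset A)
  | n + 1, m => (m : Multiset (A ⊕ HMd A n)).bind fun e =>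
      match e with
      | Sum.inl a => {a}
      | Sum.inr x => HMd.flat (n := n) x

/-- Top-level multiplicity of an urelement. -/
def HMd.acount : ∀ {n : ℕ}, F → HMd F n → ℕ
  | 0, f, m => (m : Multiset F).count f
  | _ + 1, f, m => (m : Multiset _).count (Sum.inl f)

/-- The multiset-ingredient relation (transitive closure of domain membership). -/
inductive Ingr (A : Type) : ∀ {k n : ℕ}, HMd A k → HMd A n → Prop
  | mem {n : ℕ} {x : HMd A n} {m : HMd A (n + 1)} : x.Memb m → Ingr A x m
  | tail {k n : ℕ} {x : HMd A k} {y : HMd A n} {m : HMd A (n + 1)} :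
      Ingr A x y → y.Memb m → Ingr A x m

/-- Disjointness of flattened domains. -/
def FDisj {k n : ℕ} (x : HMd A k) (y : HMd A n) : Prop :=
  ∀ a, a ∈ x.flat → a ∉ y.flat

/-- The singleton multiset `⌈f⌉` at each level. -/
def HMd.single : ∀ n : ℕ, A → HMd A n
  | 0, f => ({f} : Multiset A)
  | _ + 1, f => ({Sum.inl f} : Multiset _)

/-- `⌈xᶜ⌉` : the multiset containing `x` with multiplicity `c`. -/
def HMd.rep {n : ℕ} (c : ℕ) (x : HMd A n) : HMd A (n + 1) :=
  (Multiset.replicate c (Sum.inr x) : Multiset (A ⊕ HMd A n))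

/-- `⌈t₁^{n₁}, …, t_k^{n_k}⌉` built from a list of tree-multiplicity pairs. -/
def HMd.ofList {n : ℕ} (l : List (HMd A n × ℕ)) : HMd A (n + 1) :=
  ((l.map fun p => Multiset.replicate p.2 (Sum.inr p.1 : A ⊕ HMd A n)).sum :
    Multiset (A ⊕ HMd A n))

/-- A "group" multiset: one whose domain contains no urelements. -/
def HMd.NoAtoms {n : ℕ} (g : HMd A (n + 1)) : Prop :=
  ∀ a : A, Sum.inl a ∉ (g : Multiset (A ⊕ HMd A n))

/-- Tree-like multisets over `F` (Definition: singleton, solitary-extension,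
group-extension; closed under the cumulative inclusions). -/
inductive TreeLike (F : Type) : ∀ n : ℕ, HMd F n → Prop
  | sing (n : ℕ) (f : F) : TreeLike F n (HMd.single n f)
  | up {n : ℕ} {t : HMd F n} : TreeLike F n t → TreeLike F (n + 1) (HMd.up n t)
  | sol {n : ℕ} {t₁ : HMd F (n + 1)} {t₂ : HMd F n} (c : ℕ) :
      TreeLike F (n + 1) t₁ → TreeLike F n t₂ → FDisj t₁ t₂ →
      TreeLike F (n + 1) (t₁ + HMd.rep c t₂)
  | grp {n : ℕ} {t : HMd F (n + 1)} (l : List (HMd F n × ℕ)) :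
      TreeLike F (n + 1) t →
      (∀ p ∈ l, TreeLike F n p.1) →
      (∀ p ∈ l, FDisj t p.1) →
      l.Pairwise (fun p q => FDisj p.1 q.1) →
      TreeLike F (n + 2) (HMd.up (n + 1) t + HMd.rep 1 (HMd.ofList l))

/-- `x` is an ingredient of `t`, or `t` itself. -/
def IngrE {k n : ℕ} (x : HMd A k) (t : HMd A n) : Prop :=
  Ingr A x t ∨ hmEq x t

/-- `x` occurs (up to lifting) in the domain of `m`. -/
def MemUpTo {k n : ℕ} (x : HMd A k) (m : HMd A (n + 1)) : Prop :=
  ∃ y : HMd A n, HMd.Memb y m ∧ hmEq x y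

/-- `x` is the tree-like ingredient of `t` induced by (i.e. with root) `f`. -/
def RootedIngr {n : ℕ} (t : HMd F n) (f : F) {k : ℕ} (x : HMd F k) : Prop :=
  IngrE x t ∧ TreeLike F k x ∧ 0 < HMd.acount f x

/-- `p` is the parent of `f` in the tree-like multiset `t`: the induced multiset of `f`
lies in the domain of the multiset induced by `p`, directly or inside a group ingredient. -/
def IsParentIn {n : ℕ} (t : HMd F n) (f p : F) : Prop :=
  ∃ (kp : ℕ) (xp : HMd F (kp + 1)), RootedIngr t p xp ∧
    ∃ (kf : ℕ) (xf : HMd F kf), RootedIngr t f xf ∧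
      (MemUpTo xf xp ∨
        ∃ (kg : ℕ) (g : HMd F (kg + 1)), MemUpTo g xp ∧ HMd.NoAtoms g ∧ MemUpTo xf g)

/-- `f` occurs grouped in `t`: some group ingredient of `t` has a member with root `f`. -/
def InGroupOf {n : ℕ} (t : HMd F n) (f : F) : Prop :=
  ∃ (kg : ℕ) (g : HMd F (kg + 1)), Ingr F g t ∧ HMd.NoAtoms g ∧
    ∃ x : HMd F kg, HMd.Memb x g ∧ TreeLike F kg x ∧ 0 < HMd.acount f x

/-- Relaxation: set every multiplicity, at every nesting level, to 1. -/
def HMd.relax : ∀ {n : ℕ}, HMd A n → HMd A n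
  | 0, m => ((m : Multiset A).dedup : Multiset A)
  | n + 1, m =>
      (((m : Multiset (A ⊕ HMd A n)).map (Sum.map id (HMd.relax (n := n)))).dedup :
        Multiset (A ⊕ HMd A n))

/-- Renaming of urelements. -/
def HMd.mapA (g : A → B) : ∀ {n : ℕ}, HMd A n → HMd B n
  | 0, m => ((m : Multiset A).map g : Multiset B)
  | n + 1, m => ((m : Multiset (A ⊕ HMd A n)).map (Sum.map g (HMd.mapA g (n := n))) :
      Multiset (B ⊕ HMd B n))

/-- Cardinality-based feature diagrams over the feature universe `F`. -/
structure CFD (F : Type) where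
  feat : Finset F
  root : F
  root_mem : root ∈ feat
  parent : F → F
  parent_mem : ∀ f ∈ feat, f ≠ root → parent f ∈ feat
  reaches : ∀ f ∈ feat,
    Relation.ReflTransGen (fun a b => a ∈ feat ∧ a ≠ root ∧ parent a = b) f root
  groups : Finset (Finset F)
  groups_sub : ∀ G ∈ groups, ∀ f ∈ G, f ∈ feat ∧ f ≠ root
  groups_card : ∀ G ∈ groups, 1 < G.card
  groups_sib : ∀ G ∈ groups, ∀ f ∈ G, ∀ g ∈ G, parent f = parent g
  groups_disj : ∀ G ∈ groups, ∀ G' ∈ groups, G = G' ∨ Disjoint G G'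
  card : F → Set ℕ
  gcard : Finset F → Set ℕ
  card_ok : ∀ f ∈ feat, f ≠ root → (card f).Nonempty ∧ card f ≠ {0}
  gcard_ok : ∀ G ∈ groups,
    (gcard G).Finite ∧ (gcard G).Nonempty ∧ gcard G ≠ {0} ∧ ∀ c ∈ gcard G, c ≤ G.card
  parent_junk : ∀ f, ¬(f ∈ feat ∧ f ≠ root) → parent f = root
  card_junk : ∀ f, ¬(f ∈ feat ∧ f ≠ root) → card f = ∅
  gcard_junk : ∀ G, G ∉ groups → gcard G = ∅

variable {F : Type}

/-- The solitary (non-grouped) children of `f` in `D`. -/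
def solChildren (D : CFD F) (f : F) : Finset F :=
  D.feat.filter fun s => s ≠ D.root ∧ D.parent s = f ∧ ∀ G ∈ D.groups, s ∉ G

/-- The groups whose members are children of `f` in `D`. -/
def childGroups (D : CFD F) (f : F) : Finset (Finset F) :=
  D.groups.filter fun G => ∃ s ∈ G, D.parent s = f

/-- The hereditary multiset assembled from a choice of sub-products. -/
def prodMS (D : CFD F) (f : F) {n : ℕ} (hs : F → HMd F n) (hc : F → ℕ)
    (hg : Finset F → HMd F n) : HMd F (n + 1) :=
  ((({Sum.inl f} : Multiset (F ⊕ HMd F n))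
    + ((solChildren D f).val.map fun s =>
        Multiset.replicate (hc s) (Sum.inr (hs s) : F ⊕ HMd F n)).sum
    + ((childGroups D f).val.map fun G => (Sum.inr (hg G) : F ⊕ HMd F n)))
    : Multiset (F ⊕ HMd F n))

/-- The hereditary multiset assembled from a group selection. -/
def grpMS {n : ℕ} (sel : Finset F) (hs : F → HMd F n) (hc : F → ℕ) : HMd F (n + 1) :=
  ((sel.val.map fun s =>
      Multiset.replicate (hc s) (Sum.inr (hs s) : F ⊕ HMd F n)).sum :
    Multiset (F ⊕ HMd F n))

mutual
  /-- `HierProd D f m` : `m` is a hierarchical product of the subdiagram of `D` induced by `f`. -/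
  inductive HierProd {F : Type} (D : CFD F) : F → ∀ {n : ℕ}, HMd F n → Prop
    | mk {n : ℕ} (f : F) (hs : F → HMd F n) (hc : F → ℕ) (hg : Finset F → HMd F n)
        (hf : f ∈ D.feat)
        (hsol : ∀ s ∈ solChildren D f, HierProd D s (hs s))
        (hsolc : ∀ s ∈ solChildren D f, hc s ∈ D.card s)
        (hgrp : ∀ G ∈ childGroups D f, GroupProd D G (hg G)) :
        HierProd D f (prodMS D f hs hc hg)
  /-- `GroupProd D G m` : `m` is a hierarchical product associated with the group `G` of `D`. -/
  inductive GroupProd {F : Type} (D : CFD F) : Finset F → ∀ {n : ℕ}, HMd F n → Prop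
    | mk {n : ℕ} (G sel : Finset F) (hs : F → HMd F n) (hc : F → ℕ)
        (hsub : sel ⊆ G) (hG : G ∈ D.groups) (hcard : sel.card ∈ D.gcard G)
        (hmem : ∀ s ∈ sel, HierProd D s (hs s))
        (hmemc : ∀ s ∈ sel, hc s ∈ D.card s) :
        GroupProd D G (grpMS sel hs hc)
end

/-- The hierarchical theory of `D` (as a set of hereditary multisets at all levels). -/
def ProductsSet (D : CFD F) : Set (Σ n, HMd F n) := {m | HierProd D D.root m.2}

/-- A set of (tree-like) multisets is mergeable if a single CFD represents all of them. -/
def Mergeable (U : Set (Σ n, HMd F n)) : Prop :=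
  ∃ D : CFD F, ∀ m ∈ U, HierProd D D.root m.2

/-- A set is completely mergeable if it is exactly the hierarchical theory of some CFD. -/
def CompletelyMergeable (U : Set (Σ n, HMd F n)) : Prop :=
  ∃ D : CFD F, U = ProductsSet D

/-- Pointwise relaxation of a set of hereditary multisets. -/
def relaxSet (U : Set (Σ n, HMd F n)) : Set (Σ n, HMd F n) :=
  {x | ∃ m ∈ U, x = ⟨m.1, HMd.relax m.2⟩}

/-- The flat products of `D` (Definition of flat theory). -/
def FlatProd (D : CFD F) (m : Multiset F) : Prop :=
  (∀ f ∈ m, f ∈ D.feat) ∧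
  m.count D.root = 1 ∧
  (∀ f ∈ D.feat, f ≠ D.root → 0 < m.count f →
    ∃ c ∈ D.card f, m.count f = c * m.count (D.parent f)) ∧
  (∀ f ∈ D.feat, f ≠ D.root → (∀ G ∈ D.groups, f ∉ G) → 0 ∉ D.card f →
    0 < m.count (D.parent f) → 0 < m.count f) ∧
  (∀ G ∈ D.groups, ∀ g ∈ G, 0 < m.count (D.parent g) →
    (G.filter fun f => 0 < m.count f).card ∈ D.gcard G)

/-- Rooted (possibly countably infinite) trees with explicit parent function. -/
structure RTree (N : Type) where
  nodes : Set N
  countable : nodes.Countable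
  root : N
  root_mem : root ∈ nodes
  parent : N → N
  parent_mem : ∀ f ∈ nodes, f ≠ root → parent f ∈ nodes
  reaches : ∀ f ∈ nodes,
    Relation.ReflTransGen (fun a b => a ∈ nodes ∧ a ≠ root ∧ parent a = b) f root



/-! ### Auxiliary lemmas for Statement 8 -/

section Stmt8Aux

open Multiset

variable {A : Type}

theorem mem_listSum {α : Type*} {x : α} : ∀ {L : List (Multiset α)},
    x ∈ L.sum ↔ ∃ m ∈ L, x ∈ m := by
  intro L
  induction L with
  | nil => simp
  | cons m L ih => simp [Multiset.mem_add, ih]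

theorem count_inst {α : Type*} {i1 i2 : DecidableEq α} (a : α) (s : Multiset α) :
    @Multiset.count α i1 a s = @Multiset.count α i2 a s := by
  rw [Subsingleton.elim i1 i2]

theorem count_map_inj {α β : Type*} [DecidableEq α] [DecidableEq β] {g : α → β}
    (hg : Function.Injective g) (a : α) (s : Multiset α) :
    (s.map g).count (g a) = s.count a := by
  induction s using Multiset.induction with
  | empty => simp
  | cons b s ih =>
      rw [Multiset.map_cons, Multiset.count_cons, Multiset.count_cons, ih]
      by_cases h : b = a
      · subst h; simp
      · rw [if_neg (fun he => h ((hg he).symm)), if_neg (fun he : a = b => h he.symm)]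

theorem hmd_add_eq {n : ℕ} (a b : HMd A (n+1)) :
    a + b = ((a : Multiset (A ⊕ HMd A n)) + (b : Multiset (A ⊕ HMd A n))
      : Multiset (A ⊕ HMd A n)) := rfl

/-- The flattening body. -/
theorem flat_succ {n : ℕ} (m : HMd A (n + 1)) :
    m.flat = (m : Multiset (A ⊕ HMd A n)).bind fun e =>
      match e with
      | Sum.inl a => {a}
      | Sum.inr x => HMd.flat x := rfl

theorem acount_succ {F : Type} {n : ℕ} (f : F) (m : HMd F (n + 1)) :
    HMd.acount f m = (m : Multiset (F ⊕ HMd F n)).count (Sum.inl f) := rfl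

theorem memb_add {n : ℕ} {a b : HMd A (n+1)} {y : HMd A n} :
    HMd.Memb y (a + b) ↔ HMd.Memb y a ∨ HMd.Memb y b := by
  show Sum.inr y ∈ (a + b : Multiset (A ⊕ HMd A n)) ↔ _
  exact Multiset.mem_add

theorem memb_rep {n : ℕ} {c : ℕ} {x y : HMd A n} :
    HMd.Memb y (HMd.rep c x) ↔ 0 < c ∧ y = x := by
  show Sum.inr y ∈ Multiset.replicate c (Sum.inr x : A ⊕ HMd A n) ↔ _
  rw [Multiset.mem_replicate]
  constructor
  · rintro ⟨h1, h2⟩; exact ⟨Nat.pos_of_ne_zero h1, Sum.inr.inj h2⟩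
  · rintro ⟨h1, rfl⟩; exact ⟨by omega, rfl⟩

theorem memb_ofList {n : ℕ} {l : List (HMd A n × ℕ)} {y : HMd A n} :
    HMd.Memb y (HMd.ofList l) ↔ ∃ p ∈ l, 0 < p.2 ∧ y = p.1 := by
  show Sum.inr y ∈ (l.map fun p => Multiset.replicate p.2 (Sum.inr p.1 : A ⊕ HMd A n)).sum ↔ _
  rw [mem_listSum]
  constructor
  · rintro ⟨m, hm, hy⟩
    rw [List.mem_map] at hm
    obtain ⟨p, hp, rfl⟩ := hm
    rw [Multiset.mem_replicate] at hy
    exact ⟨p, hp, Nat.pos_of_ne_zero hy.1, Sum.inr.inj hy.2⟩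
  · rintro ⟨p, hp, hc, rfl⟩
    exact ⟨_, List.mem_map.mpr ⟨p, hp, rfl⟩, Multiset.mem_replicate.mpr ⟨by omega, rfl⟩⟩

theorem flat_add {n : ℕ} (a b : HMd A (n+1)) :
    (a + b).flat = a.flat + b.flat := by
  rw [hmd_add_eq, flat_succ, flat_succ, flat_succ]
  exact Multiset.add_bind (a : Multiset (A ⊕ HMd A n)) (b : Multiset (A ⊕ HMd A n)) _

theorem acount_add {F : Type} {n : ℕ} (f : F) (a b : HMd F (n+1)) :
    HMd.acount f (a + b) = HMd.acount f a + HMd.acount f b := by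
  rw [hmd_add_eq, acount_succ, acount_succ, acount_succ]
  exact Multiset.count_add _ _ _

theorem flat_rep {n : ℕ} (c : ℕ) (x : HMd A n) :
    (HMd.rep c x).flat = c • x.flat := by
  show (Multiset.replicate c (Sum.inr x : A ⊕ HMd A n)).bind _ = _
  rw [Multiset.bind, Multiset.map_replicate, Multiset.join]
  simp

theorem mem_flat_rep {n : ℕ} {c : ℕ} {x : HMd A n} {a : A} :
    a ∈ (HMd.rep c x).flat ↔ 0 < c ∧ a ∈ x.flat := by
  rw [flat_rep, Multiset.mem_nsmul]
  constructor
  · rintro ⟨h1, h2⟩; exact ⟨Nat.pos_of_ne_zero h1, h2⟩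
  · rintro ⟨h1, h2⟩; exact ⟨by omega, h2⟩

theorem acount_rep {F : Type} {n : ℕ} (c : ℕ) (x : HMd F n) (f : F) :
    HMd.acount f (HMd.rep c x) = 0 := by
  show (Multiset.replicate c (Sum.inr x : F ⊕ HMd F n)).count (Sum.inl f) = 0
  rw [Multiset.count_replicate]
  simp

theorem acount_single {F : Type} (n : ℕ) (f a : F) :
    HMd.acount a (HMd.single n f) = if a = f then 1 else 0 := by
  cases n with
  | zero =>
      show ({f} : Multiset F).count a = _
      rw [Multiset.count_singleton]
  | succ n =>
      show ({Sum.inl f} : Multiset (F ⊕ HMd F n)).count (Sum.inl a) = _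
      rw [Multiset.count_singleton]
      by_cases h : a = f <;> simp [h]

theorem flat_single {F : Type} (n : ℕ) (f : F) :
    (HMd.single n f).flat = {f} := by
  cases n with
  | zero => rfl
  | succ n =>
      show ({Sum.inl f} : Multiset (F ⊕ HMd F n)).bind _ = _
      simp

theorem no_memb_single {F : Type} {n : ℕ} {f : F} {y : HMd F n} :
    ¬ HMd.Memb y (HMd.single (n+1) f) := by
  intro h
  have : (Sum.inr y : F ⊕ HMd F n) ∈ ({Sum.inl f} : Multiset (F ⊕ HMd F n)) := h
  simp at this

theorem mem_flat_ofList {n : ℕ} {l : List (HMd A n × ℕ)} {a : A} :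
    a ∈ (HMd.ofList l).flat ↔ ∃ p ∈ l, 0 < p.2 ∧ a ∈ p.1.flat := by
  constructor
  · intro h
    rw [flat_succ, Multiset.mem_bind] at h
    obtain ⟨e, he, ha⟩ := h
    rcases e with e | x
    · have : Sum.inl e ∈ (HMd.ofList l : Multiset (A ⊕ HMd A n)) := he
      rw [show (HMd.ofList l : Multiset (A ⊕ HMd A n)) =
        (l.map fun p => Multiset.replicate p.2 (Sum.inr p.1 : A ⊕ HMd A n)).sum from rfl,
        mem_listSum] at this
      obtain ⟨m, hm, hmem⟩ := this
      rw [List.mem_map] at hm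
      obtain ⟨p, hp, rfl⟩ := hm
      rw [Multiset.mem_replicate] at hmem
      exact absurd hmem.2 (by simp)
    · have hx : HMd.Memb x (HMd.ofList l) := he
      rw [memb_ofList] at hx
      obtain ⟨p, hp, hc, rfl⟩ := hx
      exact ⟨p, hp, hc, ha⟩
  · rintro ⟨p, hp, hc, ha⟩
    rw [flat_succ, Multiset.mem_bind]
    exact ⟨Sum.inr p.1, memb_ofList.mpr ⟨p, hp, hc, rfl⟩, ha⟩

theorem acount_ofList {F : Type} {n : ℕ} (l : List (HMd F n × ℕ)) (f : F) :
    HMd.acount f (HMd.ofList l) = 0 := by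
  rw [acount_succ, Multiset.count_eq_zero]
  intro h
  rw [show (HMd.ofList l : Multiset (F ⊕ HMd F n)) =
    (l.map fun p => Multiset.replicate p.2 (Sum.inr p.1 : F ⊕ HMd F n)).sum from rfl,
    mem_listSum] at h
  obtain ⟨m, hm, hmem⟩ := h
  rw [List.mem_map] at hm
  obtain ⟨p, hp, rfl⟩ := hm
  rw [Multiset.mem_replicate] at hmem
  exact absurd hmem.2 (by simp)

theorem noAtoms_ofList {n : ℕ} (l : List (HMd A n × ℕ)) :
    HMd.NoAtoms (HMd.ofList l) := by
  intro a h
  rw [show (HMd.ofList l : Multiset (A ⊕ HMd A n)) =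
    (l.map fun p => Multiset.replicate p.2 (Sum.inr p.1 : A ⊕ HMd A n)).sum from rfl,
    mem_listSum] at h
  obtain ⟨m, hm, hmem⟩ := h
  rw [List.mem_map] at hm
  obtain ⟨p, hp, rfl⟩ := hm
  rw [Multiset.mem_replicate] at hmem
  exact absurd hmem.2 (by simp)

theorem noAtoms_acount {F : Type} {n : ℕ} {g : HMd F (n+1)} (h : HMd.NoAtoms g) (f : F) :
    HMd.acount f g = 0 := by
  rw [acount_succ, Multiset.count_eq_zero]
  exact h f

theorem mem_flat_of_acount {F : Type} {n : ℕ} {t : HMd F n} {a : F}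
    (h : 0 < HMd.acount a t) : a ∈ t.flat := by
  cases n with
  | zero =>
      exact Multiset.count_pos.mp h
  | succ n =>
      rw [acount_succ, Multiset.count_pos] at h
      rw [flat_succ, Multiset.mem_bind]
      exact ⟨Sum.inl a, h, by simp⟩

theorem flat_memb_subset {n : ℕ} {z : HMd A n} {m : HMd A (n+1)}
    (h : HMd.Memb z m) {a : A} (ha : a ∈ z.flat) : a ∈ m.flat := by
  rw [flat_succ, Multiset.mem_bind]
  exact ⟨Sum.inr z, h, ha⟩

/-! ### `up` and `liftLe` -/

theorem up_injective : ∀ (n : ℕ), Function.Injective (HMd.up (A := A) n) := by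
  intro n
  induction n with
  | zero => exact fun x y h => Multiset.map_injective Sum.inl_injective h
  | succ n ih =>
      exact fun x y h => Multiset.map_injective
        (Sum.map_injective.mpr ⟨fun a b h => h, ih⟩) h

theorem count_map_inj' {α β : Type*} {i1 : DecidableEq α} {i2 : DecidableEq β} {g : α → β}
    (hg : Function.Injective g) (a : α) (s : Multiset α) :
    @Multiset.count β i2 (g a) (Multiset.map g s) = @Multiset.count α i1 a s :=
  @count_map_inj α β i1 i2 g hg a s

theorem acount_up {F : Type} {n : ℕ} (t : HMd F n) (f : F) :
    HMd.acount f (HMd.up n t) = HMd.acount f t := by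
  cases n with
  | zero =>
      exact count_map_inj' Sum.inl_injective f t
  | succ n =>
      exact count_map_inj' (g := Sum.map id (HMd.up n))
        (Sum.map_injective.mpr ⟨fun a b h => h, up_injective n⟩) (Sum.inl f) t

theorem flat_up {n : ℕ} (t : HMd A n) : (HMd.up n t).flat = t.flat := by
  induction n with
  | zero =>
      show ((t : Multiset A).map Sum.inl).bind _ = t
      rw [Multiset.bind_map]
      simpa using Multiset.bind_singleton (fun a : A => a) (s := t)
  | succ n ih =>
      show ((t : Multiset (A ⊕ HMd A n)).map (Sum.map id (HMd.up n))).bind _ = _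
      rw [Multiset.bind_map, flat_succ]
      apply Multiset.bind_congr
      intro e _
      rcases e with a | x
      · rfl
      · exact ih x

theorem memb_up_succ {n : ℕ} {m : HMd A (n+1)} {y : HMd A (n+1)} :
    HMd.Memb y (HMd.up (n+1) m) ↔ ∃ z, HMd.Memb z m ∧ y = HMd.up n z := by
  show Sum.inr y ∈ (m : Multiset (A ⊕ HMd A n)).map (Sum.map id (HMd.up n)) ↔ _
  rw [Multiset.mem_map]
  constructor
  · rintro ⟨e, he, hy⟩
    rcases e with a | z
    · exact absurd hy (by simp [Sum.map])
    · exact ⟨z, he, (Sum.inr.inj hy).symm⟩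
  · rintro ⟨z, hz, rfl⟩
    exact ⟨Sum.inr z, hz, rfl⟩

theorem memb_up_zero {m : HMd A 0} {y : HMd A 0} : ¬ HMd.Memb y (HMd.up 0 m) := by
  intro h
  have : (Sum.inr y : A ⊕ HMd A 0) ∈ (m : Multiset A).map Sum.inl := h
  rw [Multiset.mem_map] at this
  obtain ⟨a, _, ha⟩ := this
  exact absurd ha (by simp)

theorem liftLe_self {k : ℕ} (h : k ≤ k) (x : HMd A k) : HMd.liftLe h x = x :=
  Nat.leRecOn_self x

theorem liftLe_succ {k m : ℕ} (h1 : k ≤ m) (h2 : k ≤ m + 1) (x : HMd A k) :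
    HMd.liftLe h2 x = HMd.up m (HMd.liftLe h1 x) :=
  Nat.leRecOn_succ h1 x

theorem liftLe_succ_self {k : ℕ} (h : k ≤ k + 1) (x : HMd A k) :
    HMd.liftLe h x = HMd.up k x :=
  Nat.leRecOn_succ' x

theorem liftLe_trans {k m j : ℕ} (h1 : k ≤ m) (h2 : m ≤ j) (h3 : k ≤ j) (x : HMd A k) :
    HMd.liftLe h3 x = HMd.liftLe h2 (HMd.liftLe h1 x) :=
  Nat.leRecOn_trans h1 h2 x

theorem liftLe_injective {k m : ℕ} (h : k ≤ m) :
    Function.Injective (HMd.liftLe (A := A) h) :=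
  Nat.leRecOn_injective h _ up_injective

theorem acount_liftLe {F : Type} {k m : ℕ} (h : k ≤ m) (x : HMd F k) (f : F) :
    HMd.acount f (HMd.liftLe h x) = HMd.acount f x := by
  induction m with
  | zero =>
      have : k = 0 := by omega
      subst this
      rw [liftLe_self]
  | succ m ih =>
      rcases Nat.lt_or_ge k (m+1) with h' | h'
      · have hk : k ≤ m := by omega
        rw [liftLe_succ hk h, acount_up, ih hk]
      · have : k = m + 1 := by omega
        subst this
        rw [liftLe_self]

theorem flat_liftLe {k m : ℕ} (h : k ≤ m) (x : HMd A k) :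
    (HMd.liftLe h x).flat = x.flat := by
  induction m with
  | zero =>
      have : k = 0 := by omega
      subst this
      rw [liftLe_self]
  | succ m ih =>
      rcases Nat.lt_or_ge k (m+1) with h' | h'
      · have hk : k ≤ m := by omega
        rw [liftLe_succ hk h, flat_up, ih hk]
      · have : k = m + 1 := by omega
        subst this
        rw [liftLe_self]

/-! ### `hmEq` -/

theorem hmEq_refl {k : ℕ} (x : HMd A k) : hmEq x x := rfl

theorem hmEq_intro {k k' M : ℕ} {x : HMd A k} {y : HMd A k'}
    (hx : k ≤ M) (hy : k' ≤ M) (h : HMd.liftLe hx x = HMd.liftLe hy y) : hmEq x y := by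
  unfold hmEq
  apply liftLe_injective (Nat.max_le.mpr ⟨hx, hy⟩ : max k k' ≤ M)
  rw [← liftLe_trans (le_max_left k k') _ hx, ← liftLe_trans (le_max_right k k') _ hy, h]

theorem hmEq_elim {k k' M : ℕ} {x : HMd A k} {y : HMd A k'} (h : hmEq x y)
    (hx : k ≤ M) (hy : k' ≤ M) : HMd.liftLe hx x = HMd.liftLe hy y := by
  have hm : max k k' ≤ M := Nat.max_le.mpr ⟨hx, hy⟩
  rw [liftLe_trans (le_max_left k k') hm hx, liftLe_trans (le_max_right k k') hm hy]
  unfold hmEq at h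
  rw [h]

theorem hmEq_symm {k k' : ℕ} {x : HMd A k} {y : HMd A k'} (h : hmEq x y) : hmEq y x :=
  hmEq_intro (le_max_right k k') (le_max_left k k') (hmEq_elim h _ _).symm

theorem hmEq_trans {k1 k2 k3 : ℕ} {x : HMd A k1} {y : HMd A k2} {z : HMd A k3}
    (h1 : hmEq x y) (h2 : hmEq y z) : hmEq x z := by
  have hx : k1 ≤ max k1 (max k2 k3) := le_max_left _ _
  have hy : k2 ≤ max k1 (max k2 k3) := le_trans (le_max_left _ _) (le_max_right _ _)
  have hz : k3 ≤ max k1 (max k2 k3) := le_trans (le_max_right _ _) (le_max_right _ _)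
  exact hmEq_intro hx hz ((hmEq_elim h1 hx hy).trans (hmEq_elim h2 hy hz))

theorem hmEq_of_liftLe_eq {k k' : ℕ} {x : HMd A k} {y : HMd A k'} (h : k ≤ k')
    (he : HMd.liftLe h x = y) : hmEq x y :=
  hmEq_intro h (le_refl k') (by rw [he, liftLe_self])

theorem hmEq_dest {k k' : ℕ} {x : HMd A k} {y : HMd A k'} (hle : k ≤ k') (h : hmEq x y) :
    HMd.liftLe hle x = y := by
  have := hmEq_elim h hle (le_refl k')
  rwa [liftLe_self] at this

theorem liftLe_up {k M : ℕ} (h : k + 1 ≤ M) (h' : k ≤ M) (x : HMd A k) :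
    HMd.liftLe h (HMd.up k x) = HMd.liftLe h' x := by
  rw [liftLe_trans (Nat.le_succ k) h h', liftLe_succ_self]

theorem hmEq_up {k : ℕ} (x : HMd A k) : hmEq (HMd.up k x) x :=
  hmEq_intro (le_refl (k+1)) (Nat.le_succ k) (by rw [liftLe_self, liftLe_succ_self])

theorem hmEq_acount {F : Type} {k k' : ℕ} {x : HMd F k} {y : HMd F k'} (h : hmEq x y) (f : F) :
    HMd.acount f x = HMd.acount f y := by
  have := hmEq_elim h (le_max_left k k') (le_max_right k k')
  have hx := acount_liftLe (le_max_left k k') x f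
  have hy := acount_liftLe (le_max_right k k') y f
  rw [← hx, ← hy, this]

theorem hmEq_flat {k k' : ℕ} {x : HMd A k} {y : HMd A k'} (h : hmEq x y) :
    x.flat = y.flat := by
  have := hmEq_elim h (le_max_left k k') (le_max_right k k')
  have hx := flat_liftLe (le_max_left k k') x
  have hy := flat_liftLe (le_max_right k k') y
  rw [← hx, ← hy, this]

end Stmt8Aux



section Stmt8Aux2
open Multiset
variable {A : Type}

theorem memb_liftLe_fwd {j : ℕ} : ∀ {c : ℕ} (h : j ≤ c) (m : HMd A (j+1)) (u : HMd A j),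
    HMd.Memb u m → ∃ u', HMd.Memb u' (HMd.liftLe (Nat.succ_le_succ h) m) ∧ hmEq u u' := by
  intro c
  induction c with
  | zero =>
      intro h m u hu
      have hj : j = 0 := by omega
      subst hj
      exact ⟨u, by rw [liftLe_self]; exact hu, hmEq_refl u⟩
  | succ c ih =>
      intro h m u hu
      rcases Nat.lt_or_ge j (c+1) with h' | h'
      · have hj : j ≤ c := by omega
        obtain ⟨u', hu', he⟩ := ih hj m u hu
        refine ⟨HMd.up c u', ?_, hmEq_trans he (hmEq_symm (hmEq_up u'))⟩
        rw [liftLe_succ (Nat.succ_le_succ hj) (Nat.succ_le_succ h)]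
        exact memb_up_succ.mpr ⟨u', hu', rfl⟩
      · have hj : j = c + 1 := by omega
        subst hj
        exact ⟨u, by rw [liftLe_self]; exact hu, hmEq_refl u⟩

theorem memb_liftLe_rev {j : ℕ} : ∀ {c : ℕ} (h : j ≤ c) (m : HMd A (j+1)) (u' : HMd A c),
    HMd.Memb u' (HMd.liftLe (Nat.succ_le_succ h) m) → ∃ u, HMd.Memb u m ∧ hmEq u u' := by
  intro c
  induction c with
  | zero =>
      intro h m u hu
      have hj : j = 0 := by omega
      subst hj
      rw [liftLe_self] at hu
      exact ⟨u, hu, hmEq_refl u⟩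
  | succ c ih =>
      intro h m u hu
      rcases Nat.lt_or_ge j (c+1) with h' | h'
      · have hj : j ≤ c := by omega
        rw [liftLe_succ (Nat.succ_le_succ hj) (Nat.succ_le_succ h)] at hu
        obtain ⟨z, hz, rfl⟩ := memb_up_succ.mp hu
        obtain ⟨u, hu2, he⟩ := ih hj m z hz
        exact ⟨u, hu2, hmEq_trans he (hmEq_symm (hmEq_up z))⟩
      · have hj : j = c + 1 := by omega
        subst hj
        rw [liftLe_self] at hu
        exact ⟨u, hu, hmEq_refl u⟩

theorem no_memb_lift0 : ∀ {c : ℕ} (h : 0 ≤ c + 1) (w : HMd A 0) (u : HMd A c),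
    ¬ HMd.Memb u (HMd.liftLe h w) := by
  intro c
  induction c with
  | zero =>
      intro h w u hu
      rw [liftLe_succ_self] at hu
      exact memb_up_zero hu
  | succ c ih =>
      intro h w u hu
      rw [liftLe_succ (Nat.zero_le (c+1)) h] at hu
      obtain ⟨z, hz, rfl⟩ := memb_up_succ.mp hu
      exact ih _ w z hz

theorem memb_hmEq_zero {j : ℕ} {m : HMd A (j+1)} {w : HMd A 0} (h : hmEq m w)
    {u : HMd A j} (hu : HMd.Memb u m) : False := by
  have hd : HMd.liftLe (Nat.zero_le (j+1)) w = m := hmEq_dest _ (hmEq_symm h)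
  rw [← hd] at hu
  exact no_memb_lift0 _ w u hu

theorem memUpTo_of_memb {n : ℕ} {y : HMd A n} {m : HMd A (n+1)} (h : HMd.Memb y m) :
    MemUpTo y m := ⟨y, h, hmEq_refl y⟩

theorem memUpTo_congr_left {k k' n : ℕ} {x : HMd A k} {x' : HMd A k'} (h : hmEq x x')
    {m : HMd A (n+1)} : MemUpTo x m ↔ MemUpTo x' m := by
  constructor
  · rintro ⟨y, hy, he⟩; exact ⟨y, hy, hmEq_trans (hmEq_symm h) he⟩
  · rintro ⟨y, hy, he⟩; exact ⟨y, hy, hmEq_trans h he⟩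

theorem memUpTo_liftLe {k j c : ℕ} (h : j ≤ c) (m : HMd A (j+1)) (x : HMd A k) :
    MemUpTo x (HMd.liftLe (Nat.succ_le_succ h) m) ↔ MemUpTo x m := by
  constructor
  · rintro ⟨y, hy, he⟩
    obtain ⟨u, hu, he2⟩ := memb_liftLe_rev h m y hy
    exact ⟨u, hu, hmEq_trans he (hmEq_symm he2)⟩
  · rintro ⟨y, hy, he⟩
    obtain ⟨u', hu', he2⟩ := memb_liftLe_fwd h m y hy
    exact ⟨u', hu', hmEq_trans he he2⟩

theorem memUpTo_congr_right {k j c : ℕ} {x : HMd A k} {m : HMd A (j+1)} {w : HMd A (c+1)}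
    (h : hmEq m w) : MemUpTo x m ↔ MemUpTo x w := by
  rcases le_total j c with hle | hle
  · have hd : HMd.liftLe (Nat.succ_le_succ hle) m = w := hmEq_dest _ h
    rw [← hd]
    exact (memUpTo_liftLe hle m x).symm
  · have hd : HMd.liftLe (Nat.succ_le_succ hle) w = m := hmEq_dest _ (hmEq_symm h)
    rw [← hd]
    exact memUpTo_liftLe hle w x

theorem memUpTo_up {k n : ℕ} {x : HMd A k} {m : HMd A (n+1)} :
    MemUpTo x (HMd.up (n+1) m) ↔ MemUpTo x m :=
  memUpTo_congr_right (hmEq_up m)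

/-! ### Ingredients -/

theorem ingr_dest {k n : ℕ} {z : HMd A k} {m : HMd A (n+1)} (h : Ingr A z m) :
    ∃ y : HMd A n, HMd.Memb y m ∧ (Ingr A z y ∨ hmEq z y) := by
  cases h with
  | mem h => exact ⟨_, h, Or.inr (hmEq_refl _)⟩
  | tail hzy hym => exact ⟨_, hym, Or.inl hzy⟩

theorem ingr_trans {k j n : ℕ} {x : HMd A k} {y : HMd A j} {m : HMd A n}
    (h1 : Ingr A x y) (h2 : Ingr A y m) : Ingr A x m := by
  induction h2 with
  | mem h => exact .tail h1 h
  | tail _ hmem ih => exact .tail (ih h1) hmem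

theorem ingr_mono {k n : ℕ} {z : HMd A k} {m m' : HMd A (n+1)} (h : Ingr A z m)
    (hm : ∀ y : HMd A n, HMd.Memb y m → HMd.Memb y m') : Ingr A z m' := by
  cases h with
  | mem h => exact .mem (hm _ h)
  | tail hz hmem => exact .tail hz (hm _ hmem)

theorem ingr_up_map {k n : ℕ} {z : HMd A k} {m : HMd A n} (h : Ingr A z m) :
    Ingr A (HMd.up k z) (HMd.up n m) := by
  induction h with
  | mem h => exact .mem (memb_up_succ.mpr ⟨_, h, rfl⟩)
  | tail _ hmem ih => exact .tail ih (memb_up_succ.mpr ⟨_, hmem, rfl⟩)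

theorem ingr_up_dest : ∀ {j k : ℕ} {z : HMd A k} {m : HMd A j},
    Ingr A z (HMd.up j m) → ∃ (i : ℕ) (y : HMd A i), Ingr A y m ∧ hmEq z y := by
  intro j
  induction j with
  | zero =>
      intro k z m h
      obtain ⟨y, hy, _⟩ := ingr_dest h
      exact absurd hy memb_up_zero
  | succ j ih =>
      intro k z m h
      obtain ⟨y, hy, hcase⟩ := ingr_dest h
      obtain ⟨w, hw, rfl⟩ := memb_up_succ.mp hy
      rcases hcase with hz | hz
      · obtain ⟨i, y', hy', he⟩ := ih hz
        exact ⟨i, y', .tail hy' hw, he⟩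
      · exact ⟨j, w, .mem hw, hmEq_trans hz (hmEq_up w)⟩

theorem flat_ingr_subset {k n : ℕ} {z : HMd A k} {m : HMd A n} (h : Ingr A z m)
    {a : A} (ha : a ∈ z.flat) : a ∈ m.flat := by
  induction h with
  | mem h => exact flat_memb_subset h ha
  | tail _ hmem ih => exact flat_memb_subset hmem (ih ha)

/-- hmEq-closed strict ingredient relation. -/
def IngrS {k n : ℕ} (x : HMd A k) (t : HMd A n) : Prop :=
  ∃ (j : ℕ) (y : HMd A j), hmEq x y ∧ Ingr A y t

/-- hmEq-closed "ingredient or self" relation. -/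
def IngrU {k n : ℕ} (x : HMd A k) (t : HMd A n) : Prop :=
  IngrS x t ∨ hmEq x t

theorem ingrS_congr_left {k k' n : ℕ} {x : HMd A k} {x' : HMd A k'} (h : hmEq x x')
    {t : HMd A n} : IngrS x t ↔ IngrS x' t := by
  constructor
  · rintro ⟨j, y, he, hy⟩; exact ⟨j, y, hmEq_trans (hmEq_symm h) he, hy⟩
  · rintro ⟨j, y, he, hy⟩; exact ⟨j, y, hmEq_trans h he, hy⟩

theorem ingrU_congr_left {k k' n : ℕ} {x : HMd A k} {x' : HMd A k'} (h : hmEq x x')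
    {t : HMd A n} : IngrU x t ↔ IngrU x' t := by
  unfold IngrU
  rw [ingrS_congr_left h]
  constructor
  · rintro (h' | h'); exact Or.inl h'; exact Or.inr (hmEq_trans (hmEq_symm h) h')
  · rintro (h' | h'); exact Or.inl h'; exact Or.inr (hmEq_trans h h')

theorem ingrS_of_ingr {k n : ℕ} {x : HMd A k} {t : HMd A n} (h : Ingr A x t) : IngrS x t :=
  ⟨k, x, hmEq_refl x, h⟩

theorem ingrS_of_memb {n : ℕ} {y : HMd A n} {m : HMd A (n+1)} (h : HMd.Memb y m) :
    IngrS y m := ingrS_of_ingr (.mem h)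

theorem ingrS_up {k n : ℕ} {z : HMd A k} {t : HMd A n} :
    IngrS z (HMd.up n t) ↔ IngrS z t := by
  constructor
  · rintro ⟨j, y, he, hy⟩
    obtain ⟨i, y', hy', he'⟩ := ingr_up_dest hy
    exact ⟨i, y', hmEq_trans he he', hy'⟩
  · rintro ⟨j, y, he, hy⟩
    exact ⟨j+1, HMd.up j y, hmEq_trans he (hmEq_symm (hmEq_up y)), ingr_up_map hy⟩

theorem ingrS_liftLe {k n : ℕ} {z : HMd A k} {t : HMd A n} :
    ∀ {c : ℕ} (h : n ≤ c), IngrS z (HMd.liftLe h t) ↔ IngrS z t := by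
  intro c
  induction c with
  | zero =>
      intro h
      have hn : n = 0 := by omega
      subst hn
      rw [liftLe_self]
  | succ c ih =>
      intro h
      rcases Nat.lt_or_ge n (c+1) with h' | h'
      · have hn : n ≤ c := by omega
        rw [liftLe_succ hn h, ingrS_up, ih hn]
      · have hn : n = c + 1 := by omega
        subst hn
        rw [liftLe_self]

theorem ingrS_congr_right {k n c : ℕ} {z : HMd A k} {t : HMd A n} {t' : HMd A c}
    (h : hmEq t t') : IngrS z t ↔ IngrS z t' := by
  rcases le_total n c with hle | hle
  · have hd : HMd.liftLe hle t = t' := hmEq_dest _ h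
    rw [← hd, ingrS_liftLe]
  · have hd : HMd.liftLe hle t' = t := hmEq_dest _ (hmEq_symm h)
    rw [← hd, ingrS_liftLe]

theorem ingrU_congr_right {k n c : ℕ} {z : HMd A k} {t : HMd A n} {t' : HMd A c}
    (h : hmEq t t') : IngrU z t ↔ IngrU z t' := by
  unfold IngrU
  rw [ingrS_congr_right h]
  constructor
  · rintro (h' | h'); exact Or.inl h'; exact Or.inr (hmEq_trans h' h)
  · rintro (h' | h'); exact Or.inl h'; exact Or.inr (hmEq_trans h' (hmEq_symm h))

theorem ingrS_trans' {k j n : ℕ} {z : HMd A k} {y : HMd A j} {t : HMd A n}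
    (h1 : IngrS z y) (h2 : IngrU y t) : IngrS z t := by
  rcases h2 with ⟨j', y', he, hy'⟩ | he
  · obtain ⟨i, w, hzw, hw⟩ := (ingrS_congr_right he).mp h1
    exact ⟨i, w, hzw, ingr_trans hw hy'⟩
  · exact (ingrS_congr_right he).mp h1

theorem memUpTo_ingrS {k j n : ℕ} {x : HMd A k} {b : HMd A (j+1)} {t : HMd A n}
    (h : MemUpTo x b) (hb : IngrU b t) : IngrS x t := by
  obtain ⟨y, hy, he⟩ := h
  exact ingrS_trans' ((ingrS_congr_left (hmEq_symm he)).mp (ingrS_of_memb hy)) hb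

theorem ingrS_flat_subset {k n : ℕ} {z : HMd A k} {t : HMd A n} (h : IngrS z t)
    {a : A} (ha : a ∈ z.flat) : a ∈ t.flat := by
  obtain ⟨j, y, he, hy⟩ := h
  rw [hmEq_flat he] at ha
  exact flat_ingr_subset hy ha

theorem ingrU_flat_subset {k n : ℕ} {z : HMd A k} {t : HMd A n} (h : IngrU z t)
    {a : A} (ha : a ∈ z.flat) : a ∈ t.flat := by
  rcases h with h | h
  · exact ingrS_flat_subset h ha
  · rwa [← hmEq_flat h]

theorem not_ingrS_self {n : ℕ} {t : HMd A n} (r : A) (hr : 0 < HMd.acount r t)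
    (hI3 : ∀ (k : ℕ) (z : HMd A k), Ingr A z t → r ∉ z.flat) : ¬ IngrS t t := by
  rintro ⟨j, y, he, hy⟩
  exact hI3 j y hy (by rw [← hmEq_flat he]; exact mem_flat_of_acount hr)

end Stmt8Aux2


section Stmt8Aux3
open Multiset
variable {F : Type}

theorem memb_sol {n c : ℕ} {t1 : HMd F (n+1)} {t2 : HMd F n} {y : HMd F n} :
    HMd.Memb y (t1 + HMd.rep c t2) ↔ HMd.Memb y t1 ∨ (0 < c ∧ y = t2) := by
  rw [memb_add, memb_rep]

theorem ingrS_sol {k n c : ℕ} {t1 : HMd F (n+1)} {t2 : HMd F n} {z : HMd F k} :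
    IngrS z (t1 + HMd.rep c t2) ↔ IngrS z t1 ∨ (0 < c ∧ IngrU z t2) := by
  constructor
  · rintro ⟨j, y, he, hy⟩
    obtain ⟨w, hw, hcase⟩ := ingr_dest hy
    rw [memb_sol] at hw
    rcases hw with hw | ⟨hc, rfl⟩
    · left
      rcases hcase with h | h
      · exact ⟨j, y, he, .tail h hw⟩
      · exact ⟨n, w, hmEq_trans he h, .mem hw⟩
    · right
      refine ⟨hc, ?_⟩
      rcases hcase with h | h
      · exact Or.inl ⟨j, y, he, h⟩
      · exact Or.inr (hmEq_trans he h)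
  · rintro (⟨j, y, he, hy⟩ | ⟨hc, hu⟩)
    · exact ⟨j, y, he, ingr_mono hy (fun w hw => memb_sol.mpr (Or.inl hw))⟩
    · have hmemb : HMd.Memb t2 (t1 + HMd.rep c t2) := memb_sol.mpr (Or.inr ⟨hc, rfl⟩)
      rcases hu with ⟨j, y, he, hy⟩ | he
      · exact ⟨j, y, he, .tail hy hmemb⟩
      · exact ⟨n, t2, he, .mem hmemb⟩

theorem memUpTo_sol {k n c : ℕ} {t1 : HMd F (n+1)} {t2 : HMd F n} {x : HMd F k} :
    MemUpTo x (t1 + HMd.rep c t2) ↔ MemUpTo x t1 ∨ (0 < c ∧ hmEq x t2) := by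
  constructor
  · rintro ⟨y, hy, he⟩
    rw [memb_sol] at hy
    rcases hy with hy | ⟨hc, rfl⟩
    · exact Or.inl ⟨y, hy, he⟩
    · exact Or.inr ⟨hc, he⟩
  · rintro (⟨y, hy, he⟩ | ⟨hc, he⟩)
    · exact ⟨y, memb_sol.mpr (Or.inl hy), he⟩
    · exact ⟨t2, memb_sol.mpr (Or.inr ⟨hc, rfl⟩), he⟩

theorem memb_grp {n : ℕ} {t : HMd F (n+1)} {l : List (HMd F n × ℕ)} {y : HMd F (n+1)} :
    HMd.Memb y (HMd.up (n+1) t + HMd.rep 1 (HMd.ofList l)) ↔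
      (∃ z, HMd.Memb z t ∧ y = HMd.up n z) ∨ y = HMd.ofList l := by
  rw [memb_add, memb_rep, memb_up_succ]
  simp

theorem memUpTo_grp {k n : ℕ} {t : HMd F (n+1)} {l : List (HMd F n × ℕ)} {x : HMd F k} :
    MemUpTo x (HMd.up (n+1) t + HMd.rep 1 (HMd.ofList l)) ↔
      MemUpTo x t ∨ hmEq x (HMd.ofList l) := by
  constructor
  · rintro ⟨y, hy, he⟩
    rw [memb_grp] at hy
    rcases hy with ⟨z, hz, rfl⟩ | rfl
    · exact Or.inl ⟨z, hz, hmEq_trans he (hmEq_up z)⟩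
    · exact Or.inr he
  · rintro (⟨y, hy, he⟩ | he)
    · exact ⟨HMd.up n y, memb_grp.mpr (Or.inl ⟨y, hy, rfl⟩),
        hmEq_trans he (hmEq_symm (hmEq_up y))⟩
    · exact ⟨HMd.ofList l, memb_grp.mpr (Or.inr rfl), he⟩

theorem memUpTo_ofList {k n : ℕ} {l : List (HMd F n × ℕ)} {x : HMd F k} :
    MemUpTo x (HMd.ofList l) ↔ ∃ p ∈ l, 0 < p.2 ∧ hmEq x p.1 := by
  constructor
  · rintro ⟨y, hy, he⟩
    obtain ⟨p, hp, hc, rfl⟩ := memb_ofList.mp hy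
    exact ⟨p, hp, hc, he⟩
  · rintro ⟨p, hp, hc, he⟩
    exact ⟨p.1, memb_ofList.mpr ⟨p, hp, hc, rfl⟩, he⟩

theorem ingrS_grp {k n : ℕ} {t : HMd F (n+1)} {l : List (HMd F n × ℕ)} {z : HMd F k} :
    IngrS z (HMd.up (n+1) t + HMd.rep 1 (HMd.ofList l)) ↔
      IngrS z t ∨ hmEq z (HMd.ofList l) ∨ ∃ p ∈ l, 0 < p.2 ∧ IngrU z p.1 := by
  constructor
  · rintro ⟨j, y, he, hy⟩
    obtain ⟨w, hw, hcase⟩ := ingr_dest hy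
    rw [memb_grp] at hw
    rcases hw with ⟨w0, hw0, rfl⟩ | rfl
    · left
      rcases hcase with h | h
      · obtain ⟨i, y', hy', he'⟩ := ingr_up_dest h
        exact ⟨i, y', hmEq_trans he he', .tail hy' hw0⟩
      · exact ⟨n, w0, hmEq_trans he (hmEq_trans h (hmEq_up w0)), .mem hw0⟩
    · rcases hcase with h | h
      · obtain ⟨v, hv, hcase2⟩ := ingr_dest h
        obtain ⟨p, hp, hc, rfl⟩ := memb_ofList.mp hv
        right; right
        refine ⟨p, hp, hc, ?_⟩
        rcases hcase2 with h2 | h2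
        · exact Or.inl ⟨j, y, he, h2⟩
        · exact Or.inr (hmEq_trans he h2)
      · exact Or.inr (Or.inl (hmEq_trans he h))
  · have hG : HMd.Memb (HMd.ofList l) (HMd.up (n+1) t + HMd.rep 1 (HMd.ofList l)) :=
      memb_grp.mpr (Or.inr rfl)
    rintro (⟨j, y, he, hy⟩ | he | ⟨p, hp, hc, hu⟩)
    · refine ⟨j+1, HMd.up j y, hmEq_trans he (hmEq_symm (hmEq_up y)), ?_⟩
      exact ingr_mono (ingr_up_map hy) (fun w hw => memb_grp.mpr (Or.inl (memb_up_succ.mp hw)))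
    · exact ⟨n+1, HMd.ofList l, he, .mem hG⟩
    · have hpm : Ingr F p.1 (HMd.up (n+1) t + HMd.rep 1 (HMd.ofList l)) :=
        .tail (.mem (memb_ofList.mpr ⟨p, hp, hc, rfl⟩)) hG
      rcases hu with ⟨j, y, he, hy⟩ | he
      · exact ⟨j, y, he, ingr_trans hy hpm⟩
      · exact ⟨n, p.1, he, hpm⟩

/-- Condition guaranteeing unique location: `x` has a top atom, or a member with a top atom. -/
def Cond {k : ℕ} (x : HMd F k) : Prop :=
  (∃ a, 0 < HMd.acount a x) ∨
  (∃ a : F, ∃ (j : ℕ) (z : HMd F j) (m : HMd F (j+1)),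
    hmEq x m ∧ HMd.Memb z m ∧ 0 < HMd.acount a z)

theorem cond_congr {k k' : ℕ} {x : HMd F k} {x' : HMd F k'} (h : hmEq x x')
    (hc : Cond x) : Cond x' := by
  rcases hc with ⟨a, ha⟩ | ⟨a, j, z, m, he, hz, ha⟩
  · exact Or.inl ⟨a, by rwa [← hmEq_acount h]⟩
  · exact Or.inr ⟨a, j, z, m, hmEq_trans (hmEq_symm h) he, hz, ha⟩

theorem cond_flat {k : ℕ} {x : HMd F k} (hc : Cond x) : ∃ a, a ∈ x.flat := by
  rcases hc with ⟨a, ha⟩ | ⟨a, j, z, m, he, hz, ha⟩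
  · exact ⟨a, mem_flat_of_acount ha⟩
  · refine ⟨a, ?_⟩
    rw [hmEq_flat he]
    exact flat_memb_subset hz (mem_flat_of_acount ha)

/-- The full induction invariant for tree-like multisets. -/
def Inv {n : ℕ} (t : HMd F n) : Prop :=
  (∃ r, 0 < HMd.acount r t) ∧
  (∀ (k : ℕ) (z : HMd F k), IngrU z t →
    ∀ a b, 0 < HMd.acount a z → 0 < HMd.acount b z → a = b) ∧
  (∀ a, 0 < HMd.acount a t → ∀ (k : ℕ) (z : HMd F k), IngrS z t → a ∉ z.flat) ∧
  (∀ a (k k' : ℕ) (x : HMd F k) (y : HMd F k'), IngrU x t → IngrU y t →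
    0 < HMd.acount a x → 0 < HMd.acount a y → hmEq x y) ∧
  (∀ (k k1 k2 : ℕ) (x : HMd F k) (y1 : HMd F (k1+1)) (y2 : HMd F (k2+1)),
    IngrU y1 t → IngrU y2 t → MemUpTo x y1 → MemUpTo x y2 → Cond x → hmEq y1 y2) ∧
  (∀ f, f ∈ t.flat → HMd.acount f t = 0 → ∃ p, p ∈ t.flat ∧ IsParentIn t f p)

theorem hs_of_sub {n n' : ℕ} (sub : HMd F n) (t' : HMd F n') (hI : IngrE sub t')
    (hTL : TreeLike F n sub) :
    (∀ (k kp : ℕ) (x : HMd F k) (xp : HMd F (kp+1)), hmEq xp sub → ¬ MemUpTo x xp) ∨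
    (∃ (js : ℕ) (s' : HMd F (js+1)), IngrE s' t' ∧ TreeLike F (js+1) s' ∧
      (∀ a, HMd.acount a s' = HMd.acount a sub) ∧
      (∀ (k kp : ℕ) (x : HMd F k) (xp : HMd F (kp+1)), hmEq xp sub → MemUpTo x xp →
        MemUpTo x s')) := by
  cases n with
  | zero =>
      left
      intro k kp x xp he hm
      obtain ⟨u, hu, _⟩ := hm
      exact memb_hmEq_zero he hu
  | succ j =>
      right
      exact ⟨j, sub, hI, hTL, fun a => rfl,
        fun k kp x xp he hm => (memUpTo_congr_right he).mp hm⟩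

theorem isParentIn_transfer {ns n' : ℕ} {sub : HMd F ns} {t' : HMd F n'} {f p : F}
    (hpar : IsParentIn sub f p)
    (hnotf : HMd.acount f sub = 0)
    (htr : ∀ {k : ℕ} (x : HMd F k), Ingr F x sub → TreeLike F k x →
        ∃ (j : ℕ) (x' : HMd F j), Ingr F x' t' ∧ hmEq x x' ∧ TreeLike F j x')
    (htrP : ∀ {k : ℕ} (x : HMd F (k+1)), Ingr F x sub → TreeLike F (k+1) x →
        ∃ (j : ℕ) (x' : HMd F (j+1)), Ingr F x' t' ∧ hmEq x x' ∧ TreeLike F (j+1) x')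
    (hs : (∀ (k kp : ℕ) (x : HMd F k) (xp : HMd F (kp+1)), hmEq xp sub → ¬ MemUpTo x xp) ∨
      (∃ (js : ℕ) (s' : HMd F (js+1)), IngrE s' t' ∧ TreeLike F (js+1) s' ∧
        (∀ a, HMd.acount a s' = HMd.acount a sub) ∧
        (∀ (k kp : ℕ) (x : HMd F k) (xp : HMd F (kp+1)), hmEq xp sub → MemUpTo x xp →
          MemUpTo x s'))) :
    IsParentIn t' f p := by
  obtain ⟨kp, xp, ⟨hIp, hTp, hap⟩, kf, xf, ⟨hIf, hTf, haf⟩, hlink⟩ := hpar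
  have hIf' : Ingr F xf sub := by
    rcases hIf with h | h
    · exact h
    · exfalso
      rw [hmEq_acount h f, hnotf] at haf
      omega
  obtain ⟨jf, xf', hIf2, hef, hTf2⟩ := htr xf hIf' hTf
  have haf' : 0 < HMd.acount f xf' := by rw [← hmEq_acount hef f]; exact haf
  rcases hIp with hIpS | hIpE
  · obtain ⟨jp, xp', hIp2, hep, hTp2⟩ := htrP xp hIpS hTp
    refine ⟨jp, xp', ⟨Or.inl hIp2, hTp2, by rw [← hmEq_acount hep p]; exact hap⟩,
      jf, xf', ⟨Or.inl hIf2, hTf2, haf'⟩, ?_⟩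
    rcases hlink with hd | ⟨kg, g, hg1, hg2, hg3⟩
    · exact Or.inl ((memUpTo_congr_right hep).mp ((memUpTo_congr_left hef).mp hd))
    · exact Or.inr ⟨kg, g, (memUpTo_congr_right hep).mp hg1, hg2,
        (memUpTo_congr_left hef).mp hg3⟩
  · rcases hs with hnone | ⟨js, s', hIs, hTs, hac, hmem⟩
    · exfalso
      rcases hlink with hd | ⟨kg, g, hg1, _, _⟩
      · exact hnone _ _ xf xp hIpE hd
      · exact hnone _ _ g xp hIpE hg1
    · refine ⟨js, s', ⟨hIs, hTs, ?_⟩, jf, xf', ⟨Or.inl hIf2, hTf2, haf'⟩, ?_⟩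
      · rw [hac p, ← hmEq_acount hIpE p]; exact hap
      · rcases hlink with hd | ⟨kg, g, hg1, hg2, hg3⟩
        · exact Or.inl ((memUpTo_congr_left hef).mp (hmem _ _ xf xp hIpE hd))
        · exact Or.inr ⟨kg, g, hmem _ _ g xp hIpE hg1, hg2, (memUpTo_congr_left hef).mp hg3⟩

end Stmt8Aux3


section Stmt8Aux4
open Multiset
variable {F : Type}

theorem up_single (n : ℕ) (f0 : F) :
    HMd.up n (HMd.single n f0) = HMd.single (n+1) f0 := by
  cases n with
  | zero =>
      show ({f0} : Multiset F).map Sum.inl = ({Sum.inl f0} : Multiset (F ⊕ HMd F 0))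
      simp
  | succ m =>
      show ({Sum.inl f0} : Multiset (F ⊕ HMd F m)).map (Sum.map id (HMd.up m)) = _
      rw [Multiset.map_singleton]
      rfl

theorem liftLe_single {n : ℕ} (f0 : F) : ∀ {c : ℕ} (h : n ≤ c),
    HMd.liftLe h (HMd.single n f0) = HMd.single c f0 := by
  intro c
  induction c with
  | zero =>
      intro h
      have hn : n = 0 := by omega
      subst hn
      rw [liftLe_self]
  | succ c ih =>
      intro h
      rcases Nat.lt_or_ge n (c+1) with h' | h'
      · have hn : n ≤ c := by omega
        rw [liftLe_succ hn h, ih hn, up_single]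
      · have hn : n = c + 1 := by omega
        subst hn
        rw [liftLe_self]

theorem no_memUpTo_single {k k1 n : ℕ} {f0 : F} {y : HMd F (k1+1)}
    (he : hmEq y (HMd.single n f0)) {x : HMd F k} : ¬ MemUpTo x y := by
  rintro ⟨u, hu, _⟩
  rcases le_total (k1+1) n with hle | hle
  · cases n with
    | zero => omega
    | succ m =>
        have hd : HMd.liftLe hle y = HMd.single (m+1) f0 := hmEq_dest hle he
        obtain ⟨u', hu', _⟩ := memb_liftLe_fwd (Nat.le_of_succ_le_succ hle) y u hu
        have hu'' : HMd.Memb u' (HMd.single (m+1) f0) := by rw [← hd]; exact hu'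
        exact no_memb_single hu''
  · have hd : HMd.liftLe hle (HMd.single n f0) = y := hmEq_dest hle (hmEq_symm he)
    rw [← hd, liftLe_single f0 hle] at hu
    exact no_memb_single hu

theorem no_ingr_single {n : ℕ} {f0 : F} {k : ℕ} {z : HMd F k} :
    ¬ Ingr F z (HMd.single n f0) := by
  intro hz
  cases n with
  | zero => cases hz
  | succ m =>
      obtain ⟨y, hy, _⟩ := ingr_dest hz
      exact no_memb_single hy

/-- The master induction. -/
theorem treeLike_inv : ∀ {n : ℕ} {t : HMd F n}, TreeLike F n t → Inv t := by
  intro n t ht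
  induction ht with
  | sing n f0 =>
      have hac : ∀ a, HMd.acount a (HMd.single n f0) = if a = f0 then 1 else 0 :=
        fun a => acount_single n f0 a
      have hnoS : ∀ (k : ℕ) (z : HMd F k), ¬ IngrS z (HMd.single n f0) := by
        rintro k z ⟨j, y, he, hy⟩
        exact no_ingr_single hy
      have hU : ∀ (k : ℕ) (z : HMd F k), IngrU z (HMd.single n f0) →
          hmEq z (HMd.single n f0) := by
        rintro k z (hz | hz)
        · exact absurd hz (hnoS k z)
        · exact hz
      refine ⟨⟨f0, by rw [hac]; simp⟩, ?_, ?_, ?_, ?_, ?_⟩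
      · intro k z hz a b ha hb
        have he := hU k z hz
        rw [hmEq_acount he a, hac a] at ha
        rw [hmEq_acount he b, hac b] at hb
        by_cases h1 : a = f0
        · by_cases h2 : b = f0
          · rw [h1, h2]
          · rw [if_neg h2] at hb; omega
        · rw [if_neg h1] at ha; omega
      · intro a _ k z hz
        exact absurd hz (hnoS k z)
      · intro a k k' x y hx hy _ _
        exact hmEq_trans (hU k x hx) (hmEq_symm (hU k' y hy))
      · intro k k1 k2 x y1 y2 hy1 hy2 hm1 hm2 _
        exact absurd hm1 (no_memUpTo_single (hU _ y1 hy1))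
      · intro f hf hnf
        rw [flat_single] at hf
        rw [Multiset.mem_singleton] at hf
        subst hf
        rw [hac, if_pos rfl] at hnf
        omega
  | up hyp ih =>
      rename_i m t0
      obtain ⟨⟨r, hr⟩, iR2, iI3, iU, iLOC, iEX⟩ := ih
      have hE : hmEq (HMd.up m t0) t0 := hmEq_up t0
      refine ⟨⟨r, by rw [acount_up]; exact hr⟩, ?_, ?_, ?_, ?_, ?_⟩
      · intro k z hz
        exact iR2 k z ((ingrU_congr_right hE).mp hz)
      · intro a ha k z hz
        rw [acount_up] at ha
        exact iI3 a ha k z ((ingrS_congr_right hE).mp hz)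
      · intro a k k' x y hx hy hax hay
        exact iU a k k' x y ((ingrU_congr_right hE).mp hx) ((ingrU_congr_right hE).mp hy)
          hax hay
      · intro k k1 k2 x y1 y2 hy1 hy2 hm1 hm2 hcnd
        exact iLOC k k1 k2 x y1 y2 ((ingrU_congr_right hE).mp hy1)
          ((ingrU_congr_right hE).mp hy2) hm1 hm2 hcnd
      · intro f hf hnf
        rw [flat_up] at hf
        rw [acount_up] at hnf
        obtain ⟨p, hp, hpar⟩ := iEX f hf hnf
        refine ⟨p, by rw [flat_up]; exact hp, ?_⟩
        refine isParentIn_transfer hpar hnf ?_ ?_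
          (hs_of_sub t0 (HMd.up m t0) (Or.inr (hmEq_symm hE)) hyp)
        · intro k x hx hT
          exact ⟨k+1, HMd.up k x, ingr_up_map hx, hmEq_symm (hmEq_up x), TreeLike.up hT⟩
        · intro k x hx hT
          exact ⟨k+1, HMd.up (k+1) x, ingr_up_map hx, hmEq_symm (hmEq_up x), TreeLike.up hT⟩
  | sol c hyp1 hyp2 hdisj ih1 ih2 =>
      rename_i m t1 t2
      obtain ⟨⟨r1, hr1⟩, iR2, iI3, iU, iLOC, iEX⟩ := ih1
      obtain ⟨⟨r2, hr2⟩, jR2, jI3, jU, jLOC, jEX⟩ := ih2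
      set T := t1 + HMd.rep c t2 with hT
      have hTL : TreeLike F (m+1) T := TreeLike.sol c hyp1 hyp2 hdisj
      have hacT : ∀ a, HMd.acount a T = HMd.acount a t1 := by
        intro a
        rw [hT, acount_add, acount_rep]
        omega
      have hflatT : ∀ a, a ∈ T.flat ↔ a ∈ t1.flat ∨ (0 < c ∧ a ∈ t2.flat) := by
        intro a
        rw [hT, flat_add, Multiset.mem_add, mem_flat_rep]
      have hd' : ∀ a, a ∈ t1.flat → a ∉ t2.flat := hdisj
      have hnoself1 : ¬ IngrS t1 t1 :=
        not_ingrS_self r1 hr1 (fun k z hz => iI3 r1 hr1 k z (ingrS_of_ingr hz))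
      have hnoself2 : ¬ IngrS t2 t2 :=
        not_ingrS_self r2 hr2 (fun k z hz => jI3 r2 hr2 k z (ingrS_of_ingr hz))
      -- I3 for T
      have hI3 : ∀ a, 0 < HMd.acount a T → ∀ (k : ℕ) (z : HMd F k), IngrS z T →
          a ∉ z.flat := by
        intro a haT k z hzS haz
        rw [hacT] at haT
        have hafl : a ∈ t1.flat := mem_flat_of_acount haT
        rcases ingrS_sol.mp hzS with h1 | ⟨hc0, h2⟩
        · exact iI3 a haT k z h1 haz
        · exact hd' a hafl (ingrU_flat_subset h2 haz)
      refine ⟨⟨r1, by rw [hacT]; exact hr1⟩, ?_, hI3, ?_, ?_, ?_⟩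
      · -- R2
        intro k z hz a b ha hb
        rcases hz with hzS | hzE
        · rcases ingrS_sol.mp hzS with h1 | ⟨hc0, h2⟩
          · exact iR2 k z (Or.inl h1) a b ha hb
          · exact jR2 k z h2 a b ha hb
        · have ha' : 0 < HMd.acount a t1 := by
            rw [← hacT a, ← hmEq_acount hzE a]; exact ha
          have hb' : 0 < HMd.acount b t1 := by
            rw [← hacT b, ← hmEq_acount hzE b]; exact hb
          exact iR2 _ t1 (Or.inr (hmEq_refl t1)) a b ha' hb'
      · -- U
        intro a k k' x y hx hy hax hay
        have key : ∀ {i i' : ℕ} (u : HMd F i) (v : HMd F i'), hmEq u T → IngrS v T →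
            0 < HMd.acount a u → 0 < HMd.acount a v → False := by
          intro i i' u v hu hv hau hav
          exact hI3 a (by rw [← hmEq_acount hu a]; exact hau) _ v hv
            (mem_flat_of_acount hav)
        rcases hx with hxS | hxE
        · rcases hy with hyS | hyE
          · rcases ingrS_sol.mp hxS with hx1 | ⟨hc0, hx2⟩
            · rcases ingrS_sol.mp hyS with hy1 | ⟨hc0', hy2⟩
              · exact iU a k k' x y (Or.inl hx1) (Or.inl hy1) hax hay
              · exact absurd (ingrU_flat_subset hy2 (mem_flat_of_acount hay))
                  (hd' a (ingrS_flat_subset hx1 (mem_flat_of_acount hax)))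
            · rcases ingrS_sol.mp hyS with hy1 | ⟨hc0', hy2⟩
              · exact absurd (ingrU_flat_subset hx2 (mem_flat_of_acount hax))
                  (hd' a (ingrS_flat_subset hy1 (mem_flat_of_acount hay)))
              · exact jU a k k' x y hx2 hy2 hax hay
          · exact (key y x hyE hxS hay hax).elim
        · rcases hy with hyS | hyE
          · exact (key x y hxE hyS hax hay).elim
          · exact hmEq_trans hxE (hmEq_symm hyE)
      · -- LOC
        intro k k1 k2 x y1 y2 hy1 hy2 hm1 hm2 hcnd
        obtain ⟨a, hafx⟩ := cond_flat hcnd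
        have hmem_flat : ∀ {i j : ℕ} (u : HMd F i) (v : HMd F (j+1)), MemUpTo u v →
            ∀ b, b ∈ u.flat → b ∈ v.flat := by
          rintro i j u v ⟨w, hw, he⟩ b hb
          exact flat_memb_subset hw (by rw [← hmEq_flat he]; exact hb)
        have hcls : ∀ {j : ℕ} (y : HMd F (j+1)), IngrU y T →
            hmEq y T ∨ IngrS y t1 ∨ (0 < c ∧ IngrU y t2) := by
          intro j y h
          rcases h with h | h
          · rcases ingrS_sol.mp h with h | h
            · exact Or.inr (Or.inl h)
            · exact Or.inr (Or.inr h)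
          · exact Or.inl h
        have hself : ∀ {j : ℕ} (y : HMd F (j+1)), hmEq y T → MemUpTo x y →
            MemUpTo x t1 ∨ (0 < c ∧ hmEq x t2) := by
          intro j y he hm
          exact memUpTo_sol.mp ((memUpTo_congr_right he).mp hm)
        -- impossibility helpers
        have P1 : ∀ {j : ℕ} (y : HMd F (j+1)), IngrS y t1 → MemUpTo x y →
            MemUpTo x t1 → False := by
          intro j y hyS hm hm1
          have heq : hmEq t1 y :=
            iLOC k m j x t1 y (Or.inr (hmEq_refl t1)) (Or.inl hyS) hm1 hm hcnd
          exact hnoself1 ((ingrS_congr_left (hmEq_symm heq)).mp hyS)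
        have P2 : ∀ {j : ℕ} (y : HMd F (j+1)), IngrS y t1 → MemUpTo x y →
            hmEq x t2 → False := by
          intro j y hyS hm hx2
          refine hd' a (ingrS_flat_subset hyS (hmem_flat x y hm a hafx)) ?_
          rw [← hmEq_flat hx2]
          exact hafx
        have P3 : ∀ {j : ℕ} (y : HMd F (j+1)), IngrU y t2 → MemUpTo x y →
            MemUpTo x t1 → False := by
          intro j y hyU hm hm1
          exact hd' a (hmem_flat x t1 hm1 a hafx)
            (ingrU_flat_subset hyU (hmem_flat x y hm a hafx))
        have P4 : ∀ {j : ℕ} (y : HMd F (j+1)), IngrU y t2 → MemUpTo x y →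
            hmEq x t2 → False := by
          intro j y hyU hm hx2
          exact hnoself2 ((ingrS_congr_left hx2).mp (memUpTo_ingrS hm hyU))
        have P5 : ∀ {j j' : ℕ} (y : HMd F (j+1)) (y' : HMd F (j'+1)), IngrS y t1 →
            IngrU y' t2 → MemUpTo x y → MemUpTo x y' → False := by
          intro j j' y y' hyS hyU hm hm'
          exact hd' a (ingrS_flat_subset hyS (hmem_flat x y hm a hafx))
            (ingrU_flat_subset hyU (hmem_flat x y' hm' a hafx))
        rcases hcls y1 hy1 with hc1 | hc1 | ⟨hcc1, hc1⟩ <;>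
          rcases hcls y2 hy2 with hc2 | hc2 | ⟨hcc2, hc2⟩
        · exact hmEq_trans hc1 (hmEq_symm hc2)
        · rcases hself y1 hc1 hm1 with hm1' | ⟨_, hx2⟩
          · exact (P1 y2 hc2 hm2 hm1').elim
          · exact (P2 y2 hc2 hm2 hx2).elim
        · rcases hself y1 hc1 hm1 with hm1' | ⟨_, hx2⟩
          · exact (P3 y2 hc2 hm2 hm1').elim
          · exact (P4 y2 hc2 hm2 hx2).elim
        · rcases hself y2 hc2 hm2 with hm2' | ⟨_, hx2⟩
          · exact (P1 y1 hc1 hm1 hm2').elim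
          · exact (P2 y1 hc1 hm1 hx2).elim
        · exact iLOC k k1 k2 x y1 y2 (Or.inl hc1) (Or.inl hc2) hm1 hm2 hcnd
        · exact (P5 y1 y2 hc1 hc2 hm1 hm2).elim
        · rcases hself y2 hc2 hm2 with hm2' | ⟨_, hx2⟩
          · exact (P3 y1 hc1 hm1 hm2').elim
          · exact (P4 y1 hc1 hm1 hx2).elim
        · exact (P5 y2 y1 hc2 hc1 hm2 hm1).elim
        · exact jLOC k k1 k2 x y1 y2 hc1 hc2 hm1 hm2 hcnd
      · -- EX
        intro f hf hnf
        have hnf1 : HMd.acount f t1 = 0 := by rw [← hacT]; exact hnf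
        rcases (hflatT f).mp hf with hf1 | ⟨hc0, hf2⟩
        · obtain ⟨p, hp, hpar⟩ := iEX f hf1 hnf1
          refine ⟨p, (hflatT p).mpr (Or.inl hp), ?_⟩
          refine isParentIn_transfer hpar hnf1 ?_ ?_ ?_
          · intro k x hx hTx
            exact ⟨k, x, ingr_mono hx (fun y hy => memb_sol.mpr (Or.inl hy)),
              hmEq_refl x, hTx⟩
          · intro k x hx hTx
            exact ⟨k, x, ingr_mono hx (fun y hy => memb_sol.mpr (Or.inl hy)),
              hmEq_refl x, hTx⟩
          · right
            refine ⟨m, T, Or.inr (hmEq_refl T), hTL, hacT, ?_⟩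
            intro k kp x xp he hmx
            exact memUpTo_sol.mpr (Or.inl ((memUpTo_congr_right he).mp hmx))
        · have hmemb2 : HMd.Memb t2 T := memb_sol.mpr (Or.inr ⟨hc0, rfl⟩)
          by_cases hroot : 0 < HMd.acount f t2
          · refine ⟨r1, (hflatT r1).mpr (Or.inl (mem_flat_of_acount hr1)), ?_⟩
            refine ⟨m, T, ⟨Or.inr (hmEq_refl T), hTL, by rw [hacT]; exact hr1⟩,
              m, t2, ⟨Or.inl (.mem hmemb2), hyp2, hroot⟩,
              Or.inl (memUpTo_of_memb hmemb2)⟩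
          · have hnf2 : HMd.acount f t2 = 0 := by omega
            obtain ⟨p, hp, hpar⟩ := jEX f hf2 hnf2
            refine ⟨p, (hflatT p).mpr (Or.inr ⟨hc0, hp⟩), ?_⟩
            refine isParentIn_transfer hpar hnf2 ?_ ?_
              (hs_of_sub t2 T (Or.inl (.mem hmemb2)) hyp2)
            · intro k x hx hTx
              exact ⟨k, x, .tail hx hmemb2, hmEq_refl x, hTx⟩
            · intro k x hx hTx
              exact ⟨k, x, .tail hx hmemb2, hmEq_refl x, hTx⟩
  | grp l hyp hl hdisj hpair ih ihl =>
      rename_i m t0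
      obtain ⟨⟨r0, hr0⟩, iR2, iI3, iU, iLOC, iEX⟩ := ih
      set T := HMd.up (m+1) t0 + HMd.rep 1 (HMd.ofList l) with hT
      set G := HMd.ofList l with hG
      have hTL : TreeLike F (m+2) T := TreeLike.grp l hyp hl hdisj hpair
      have hGmem : HMd.Memb G T := memb_grp.mpr (Or.inr rfl)
      have hacT : ∀ a, HMd.acount a T = HMd.acount a t0 := by
        intro a
        rw [hT, acount_add, acount_rep, acount_up]
        omega
      have hacG : ∀ a, HMd.acount a G = 0 := fun a => acount_ofList l a
      have hflatT : ∀ a, a ∈ T.flat ↔ a ∈ t0.flat ∨ ∃ p ∈ l, 0 < p.2 ∧ a ∈ p.1.flat := by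
        intro a
        rw [hT, flat_add, Multiset.mem_add, mem_flat_rep, flat_up, hG, mem_flat_ofList]
        constructor
        · rintro (h | ⟨_, h⟩)
          · exact Or.inl h
          · exact Or.inr h
        · rintro (h | h)
          · exact Or.inl h
          · exact Or.inr ⟨Nat.one_pos, h⟩
      have hpair' : ∀ p ∈ l, ∀ q ∈ l, p ≠ q → ∀ a, a ∈ p.1.flat → a ∉ q.1.flat := by
        have hsym : Symmetric (fun p q : HMd F m × ℕ =>
            ∀ a, ¬(a ∈ p.1.flat ∧ a ∈ q.1.flat)) := by
          intro p q h a ⟨h1, h2⟩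
          exact h a ⟨h2, h1⟩
        haveI : Std.Symm (fun p q : HMd F m × ℕ =>
            ∀ a, ¬(a ∈ p.1.flat ∧ a ∈ q.1.flat)) := ⟨fun _ _ h => hsym h⟩
        have hp2 := (hpair.imp (fun {p q : HMd F m × ℕ} (h : FDisj p.1 q.1) =>
          (fun a ⟨h1, h2⟩ => h a h1 h2 : ∀ a, ¬(a ∈ p.1.flat ∧ a ∈ q.1.flat)))).forall
        intro p hp q hq hpq a ha haq
        exact hp2 hp hq hpq a ⟨ha, haq⟩
      have hnoselft : ¬ IngrS t0 t0 :=
        not_ingrS_self r0 hr0 (fun k z hz => iI3 r0 hr0 k z (ingrS_of_ingr hz))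
      have hnoselfp : ∀ p ∈ l, ¬ IngrS p.1 p.1 := by
        intro p hp
        obtain ⟨⟨rp, hrp⟩, pR2, pI3, _, _, _⟩ := ihl p hp
        exact not_ingrS_self rp hrp (fun k z hz => pI3 rp hrp k z (ingrS_of_ingr hz))
      have hI3 : ∀ a, 0 < HMd.acount a T → ∀ (k : ℕ) (z : HMd F k), IngrS z T →
          a ∉ z.flat := by
        intro a haT k z hzS haz
        rw [hacT] at haT
        have haf : a ∈ t0.flat := mem_flat_of_acount haT
        rcases ingrS_grp.mp hzS with h1 | h1 | ⟨p, hp, hpc, h1⟩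
        · exact iI3 a haT k z h1 haz
        · rw [hmEq_flat h1] at haz
          obtain ⟨q, hq, _, haq⟩ := mem_flat_ofList.mp haz
          exact hdisj q hq a haf haq
        · exact hdisj p hp a haf (ingrU_flat_subset h1 haz)
      refine ⟨⟨r0, by rw [hacT]; exact hr0⟩, ?_, hI3, ?_, ?_, ?_⟩
      · -- R2
        intro k z hz a b ha hb
        rcases hz with hzS | hzE
        · rcases ingrS_grp.mp hzS with h1 | h1 | ⟨p, hp, hpc, h1⟩
          · exact iR2 k z (Or.inl h1) a b ha hb
          · rw [hmEq_acount h1 a, hacG] at ha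
            omega
          · obtain ⟨_, pR2, _, _, _, _⟩ := ihl p hp
            exact pR2 k z h1 a b ha hb
        · have ha' : 0 < HMd.acount a t0 := by
            rw [← hacT a, ← hmEq_acount hzE a]; exact ha
          have hb' : 0 < HMd.acount b t0 := by
            rw [← hacT b, ← hmEq_acount hzE b]; exact hb
          exact iR2 _ t0 (Or.inr (hmEq_refl t0)) a b ha' hb'
      · -- U
        intro a k k' x y hx hy hax hay
        have key : ∀ {i i' : ℕ} (u : HMd F i) (v : HMd F i'), hmEq u T → IngrS v T →
            0 < HMd.acount a u → 0 < HMd.acount a v → False := by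
          intro i i' u v hu hv hau hav
          exact hI3 a (by rw [← hmEq_acount hu a]; exact hau) _ v hv
            (mem_flat_of_acount hav)
        have hstrict : ∀ {i : ℕ} (u : HMd F i), IngrS u T → 0 < HMd.acount a u →
            IngrS u t0 ∨ ∃ p ∈ l, 0 < p.2 ∧ IngrU u p.1 := by
          intro i u hu hau
          rcases ingrS_grp.mp hu with h | h | h
          · exact Or.inl h
          · rw [hmEq_acount h a, hacG] at hau
            omega
          · exact Or.inr h
        rcases hx with hxS | hxE
        · rcases hy with hyS | hyE
          · rcases hstrict x hxS hax with hx1 | ⟨p, hp, hpc, hx1⟩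
            · rcases hstrict y hyS hay with hy1 | ⟨q, hq, hqc, hy1⟩
              · exact iU a k k' x y (Or.inl hx1) (Or.inl hy1) hax hay
              · exact absurd (ingrU_flat_subset hy1 (mem_flat_of_acount hay))
                  (hdisj q hq a (ingrS_flat_subset hx1 (mem_flat_of_acount hax)))
            · rcases hstrict y hyS hay with hy1 | ⟨q, hq, hqc, hy1⟩
              · exact absurd (ingrU_flat_subset hx1 (mem_flat_of_acount hax))
                  (hdisj p hp a (ingrS_flat_subset hy1 (mem_flat_of_acount hay)))
              · by_cases hpq : p = q
                · subst hpq
                  obtain ⟨_, _, _, pU, _, _⟩ := ihl p hp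
                  exact pU a k k' x y hx1 hy1 hax hay
                · exact absurd (ingrU_flat_subset hy1 (mem_flat_of_acount hay))
                    (hpair' p hp q hq hpq a
                      (ingrU_flat_subset hx1 (mem_flat_of_acount hax)))
          · exact (key y x hyE hxS hay hax).elim
        · rcases hy with hyS | hyE
          · exact (key x y hxE hyS hax hay).elim
          · exact hmEq_trans hxE (hmEq_symm hyE)
      · -- LOC
        intro k k1 k2 x y1 y2 hy1 hy2 hm1 hm2 hcnd
        obtain ⟨a, hafx⟩ := cond_flat hcnd
        have hmem_flat : ∀ {i j : ℕ} (u : HMd F i) (v : HMd F (j+1)), MemUpTo u v →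
            ∀ b, b ∈ u.flat → b ∈ v.flat := by
          rintro i j u v ⟨w, hw, he⟩ b hb
          exact flat_memb_subset hw (by rw [← hmEq_flat he]; exact hb)
        have hcls : ∀ {j : ℕ} (y : HMd F (j+1)), IngrU y T →
            hmEq y T ∨ IngrS y t0 ∨ hmEq y G ∨ ∃ p ∈ l, 0 < p.2 ∧ IngrU y p.1 := by
          intro j y h
          rcases h with h | h
          · rcases ingrS_grp.mp h with h | h | h
            · exact Or.inr (Or.inl h)
            · exact Or.inr (Or.inr (Or.inl h))
            · exact Or.inr (Or.inr (Or.inr h))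
          · exact Or.inl h
        have hself : ∀ {j : ℕ} (y : HMd F (j+1)), hmEq y T → MemUpTo x y →
            MemUpTo x t0 ∨ hmEq x G := by
          intro j y he hm
          exact memUpTo_grp.mp ((memUpTo_congr_right he).mp hm)
        -- x located in a G-like thing: x is (up to hmEq) one of the entries
        have hxG : ∀ {j : ℕ} (y : HMd F (j+1)), hmEq y G → MemUpTo x y →
            ∃ q ∈ l, 0 < q.2 ∧ hmEq x q.1 := by
          intro j y he hm
          exact memUpTo_ofList.mp ((memUpTo_congr_right he).mp hm)
        -- impossibility helpers
        have Q1 : ∀ {j : ℕ} (y : HMd F (j+1)), IngrS y t0 → MemUpTo x y →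
            MemUpTo x t0 → False := by
          intro j y hyS hm hm0
          have heq : hmEq t0 y :=
            iLOC k (m) j x t0 y (Or.inr (hmEq_refl t0)) (Or.inl hyS) hm0 hm hcnd
          exact hnoselft ((ingrS_congr_left (hmEq_symm heq)).mp hyS)
        have Q2 : ∀ {j : ℕ} (y : HMd F (j+1)), hmEq y G → MemUpTo x y →
            MemUpTo x t0 → False := by
          intro j y he hm hm0
          obtain ⟨q, hq, hqc, hxq⟩ := hxG y he hm
          refine hdisj q hq a (hmem_flat x t0 hm0 a hafx) ?_
          rw [← hmEq_flat hxq]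
          exact hafx
        have Q3 : ∀ {j : ℕ} (y : HMd F (j+1)), (∃ p ∈ l, 0 < p.2 ∧ IngrU y p.1) →
            MemUpTo x y → MemUpTo x t0 → False := by
          rintro j y ⟨p, hp, hpc, hyU⟩ hm hm0
          exact hdisj p hp a (hmem_flat x t0 hm0 a hafx)
            (ingrU_flat_subset hyU (hmem_flat x y hm a hafx))
        have Q4 : ∀ {j j' : ℕ} (y : HMd F (j+1)) (y' : HMd F (j'+1)), IngrS y t0 →
            hmEq y' G → MemUpTo x y → MemUpTo x y' → False := by
          intro j j' y y' hyS he hm hm'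
          obtain ⟨q, hq, hqc, hxq⟩ := hxG y' he hm'
          refine hdisj q hq a (ingrS_flat_subset hyS (hmem_flat x y hm a hafx)) ?_
          rw [← hmEq_flat hxq]
          exact hafx
        have Q5 : ∀ {j j' : ℕ} (y : HMd F (j+1)) (y' : HMd F (j'+1)), IngrS y t0 →
            (∃ p ∈ l, 0 < p.2 ∧ IngrU y' p.1) → MemUpTo x y → MemUpTo x y' → False := by
          rintro j j' y y' hyS ⟨p, hp, hpc, hyU⟩ hm hm'
          exact hdisj p hp a (ingrS_flat_subset hyS (hmem_flat x y hm a hafx))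
            (ingrU_flat_subset hyU (hmem_flat x y' hm' a hafx))
        have Q6 : ∀ {j j' : ℕ} (y : HMd F (j+1)) (y' : HMd F (j'+1)), hmEq y G →
            (∃ p ∈ l, 0 < p.2 ∧ IngrU y' p.1) → MemUpTo x y → MemUpTo x y' → False := by
          rintro j j' y y' he ⟨p, hp, hpc, hyU⟩ hm hm'
          obtain ⟨q, hq, hqc, hxq⟩ := hxG y he hm
          have hxS : IngrS x p.1 := memUpTo_ingrS hm' hyU
          by_cases hpd : q = p
          · subst hpd
            exact hnoselfp q hq ((ingrS_congr_left hxq).mp hxS)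
          · refine hpair' q hq p hp hpd a ?_ (ingrS_flat_subset hxS hafx)
            rw [← hmEq_flat hxq]
            exact hafx
        rcases hcls y1 hy1 with hc1 | hc1 | hc1 | hc1 <;>
          rcases hcls y2 hy2 with hc2 | hc2 | hc2 | hc2
        · exact hmEq_trans hc1 (hmEq_symm hc2)
        · rcases hself y1 hc1 hm1 with hm0 | hxGe
          · exact (Q1 y2 hc2 hm2 hm0).elim
          · -- x ≈ G located in t0-strict y2 : a ∈ flat x = flat G vs flat t0
            exfalso
            have haG : a ∈ G.flat := by rw [← hmEq_flat hxGe]; exact hafx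
            obtain ⟨q, hq, hqc, haq⟩ := mem_flat_ofList.mp haG
            exact hdisj q hq a (ingrS_flat_subset hc2 (hmem_flat x y2 hm2 a hafx)) haq
        · rcases hself y1 hc1 hm1 with hm0 | hxGe
          · exact (Q2 y2 hc2 hm2 hm0).elim
          · -- x ≈ G and x located in y2 ≈ G : fine? conclusion needs hmEq y1 y2 : but y1 ≈ T!
            -- x ≈ G means x ≈ some entry q.1 too (located in y2 ≈ G): contradiction
            exfalso
            obtain ⟨q, hq, hqc, hxq⟩ := hxG y2 hc2 hm2
            obtain ⟨⟨rq, hrq⟩, _, _, _, _, _⟩ := ihl q hq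
            have : 0 < HMd.acount rq x := by rw [hmEq_acount hxq rq]; exact hrq
            rw [hmEq_acount hxGe rq, hacG] at this
            omega
        · rcases hself y1 hc1 hm1 with hm0 | hxGe
          · exact (Q3 y2 hc2 hm2 hm0).elim
          · -- x ≈ G located inside an entry p.1 (the subtle case)
            exfalso
            rcases hcnd with ⟨b, hb⟩ | ⟨b, j, z, mm, hxm, hz, hbz⟩
            · rw [hmEq_acount hxGe b, hacG] at hb
              omega
            · obtain ⟨p, hp, hpc, hy2U⟩ := hc2
              have hzG : MemUpTo z G :=
                (memUpTo_congr_right (hmEq_trans (hmEq_symm hxm) hxGe)).mp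
                  (memUpTo_of_memb hz)
              obtain ⟨q, hq, hqc, hzq⟩ := memUpTo_ofList.mp hzG
              have hxS : IngrS x p.1 := memUpTo_ingrS hm2 hy2U
              have hzS : IngrS z p.1 :=
                ingrS_trans' ((ingrS_congr_right (hmEq_symm hxm)).mp (ingrS_of_memb hz))
                  (Or.inl hxS)
              by_cases hpd : q = p
              · subst hpd
                exact hnoselfp q hq ((ingrS_congr_left hzq).mp hzS)
              · refine hpair' q hq p hp hpd b ?_
                  (ingrS_flat_subset hzS (mem_flat_of_acount hbz))
                rw [← hmEq_flat hzq]
                exact mem_flat_of_acount hbz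
        · rcases hself y2 hc2 hm2 with hm0 | hxGe
          · exact (Q1 y1 hc1 hm1 hm0).elim
          · exfalso
            have haG : a ∈ G.flat := by rw [← hmEq_flat hxGe]; exact hafx
            obtain ⟨q, hq, hqc, haq⟩ := mem_flat_ofList.mp haG
            exact hdisj q hq a (ingrS_flat_subset hc1 (hmem_flat x y1 hm1 a hafx)) haq
        · exact iLOC k k1 k2 x y1 y2 (Or.inl hc1) (Or.inl hc2) hm1 hm2 hcnd
        · exact (Q4 y1 y2 hc1 hc2 hm1 hm2).elim
        · exact (Q5 y1 y2 hc1 hc2 hm1 hm2).elim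
        · rcases hself y2 hc2 hm2 with hm0 | hxGe
          · exact (Q2 y1 hc1 hm1 hm0).elim
          · exfalso
            obtain ⟨q, hq, hqc, hxq⟩ := hxG y1 hc1 hm1
            obtain ⟨⟨rq, hrq⟩, _, _, _, _, _⟩ := ihl q hq
            have : 0 < HMd.acount rq x := by rw [hmEq_acount hxq rq]; exact hrq
            rw [hmEq_acount hxGe rq, hacG] at this
            omega
        · exact (Q4 y2 y1 hc2 hc1 hm2 hm1).elim
        · exact hmEq_trans hc1 (hmEq_symm hc2)
        · exact (Q6 y1 y2 hc1 hc2 hm1 hm2).elim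
        · rcases hself y2 hc2 hm2 with hm0 | hxGe
          · exact (Q3 y1 hc1 hm1 hm0).elim
          · exfalso
            rcases hcnd with ⟨b, hb⟩ | ⟨b, j, z, mm, hxm, hz, hbz⟩
            · rw [hmEq_acount hxGe b, hacG] at hb
              omega
            · obtain ⟨p, hp, hpc, hy1U⟩ := hc1
              have hzG : MemUpTo z G :=
                (memUpTo_congr_right (hmEq_trans (hmEq_symm hxm) hxGe)).mp
                  (memUpTo_of_memb hz)
              obtain ⟨q, hq, hqc, hzq⟩ := memUpTo_ofList.mp hzG
              have hxS : IngrS x p.1 := memUpTo_ingrS hm1 hy1U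
              have hzS : IngrS z p.1 :=
                ingrS_trans' ((ingrS_congr_right (hmEq_symm hxm)).mp (ingrS_of_memb hz))
                  (Or.inl hxS)
              by_cases hpd : q = p
              · subst hpd
                exact hnoselfp q hq ((ingrS_congr_left hzq).mp hzS)
              · refine hpair' q hq p hp hpd b ?_
                  (ingrS_flat_subset hzS (mem_flat_of_acount hbz))
                rw [← hmEq_flat hzq]
                exact mem_flat_of_acount hbz
        · exact (Q5 y2 y1 hc2 hc1 hm2 hm1).elim
        · exact (Q6 y2 y1 hc2 hc1 hm2 hm1).elim
        · obtain ⟨p, hp, hpc, hy1U⟩ := hc1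
          obtain ⟨q, hq, hqc, hy2U⟩ := hc2
          by_cases hpd : p = q
          · subst hpd
            obtain ⟨_, _, _, _, pLOC, _⟩ := ihl p hp
            exact pLOC k k1 k2 x y1 y2 hy1U hy2U hm1 hm2 hcnd
          · exact absurd (ingrU_flat_subset hy2U (hmem_flat x y2 hm2 a hafx))
              (hpair' p hp q hq hpd a
                (ingrU_flat_subset hy1U (hmem_flat x y1 hm1 a hafx)))
      · -- EX
        intro f hf hnf
        have hnf0 : HMd.acount f t0 = 0 := by rw [← hacT]; exact hnf
        rcases (hflatT f).mp hf with hf0 | ⟨q, hq, hqc, hfq⟩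
        · obtain ⟨p, hp, hpar⟩ := iEX f hf0 hnf0
          refine ⟨p, (hflatT p).mpr (Or.inl hp), ?_⟩
          refine isParentIn_transfer hpar hnf0 ?_ ?_ ?_
          · intro k x hx hTx
            refine ⟨k+1, HMd.up k x, ?_, hmEq_symm (hmEq_up x), TreeLike.up hTx⟩
            exact ingr_mono (ingr_up_map hx)
              (fun w hw => memb_grp.mpr (Or.inl (memb_up_succ.mp hw)))
          · intro k x hx hTx
            refine ⟨k+1, HMd.up (k+1) x, ?_, hmEq_symm (hmEq_up x), TreeLike.up hTx⟩
            exact ingr_mono (ingr_up_map hx)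
              (fun w hw => memb_grp.mpr (Or.inl (memb_up_succ.mp hw)))
          · right
            refine ⟨m+1, T, Or.inr (hmEq_refl T), hTL, hacT, ?_⟩
            intro k kp x xp he hmx
            exact memUpTo_grp.mpr (Or.inl ((memUpTo_congr_right he).mp hmx))
        · have hqmem : HMd.Memb q.1 G := memb_ofList.mpr ⟨q, hq, hqc, rfl⟩
          have hqT : Ingr F q.1 T := .tail (.mem hqmem) hGmem
          by_cases hroot : 0 < HMd.acount f q.1
          · refine ⟨r0, (hflatT r0).mpr (Or.inl (mem_flat_of_acount hr0)), ?_⟩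
            refine ⟨m+1, T, ⟨Or.inr (hmEq_refl T), hTL, by rw [hacT]; exact hr0⟩,
              m, q.1, ⟨Or.inl hqT, hl q hq, hroot⟩, ?_⟩
            exact Or.inr ⟨m, G, memUpTo_of_memb hGmem, noAtoms_ofList l,
              memUpTo_of_memb hqmem⟩
          · have hnfq : HMd.acount f q.1 = 0 := by omega
            obtain ⟨_, _, _, _, _, qEX⟩ := ihl q hq
            obtain ⟨p, hp, hpar⟩ := qEX f hfq hnfq
            refine ⟨p, (hflatT p).mpr (Or.inr ⟨q, hq, hqc, hp⟩), ?_⟩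
            refine isParentIn_transfer hpar hnfq ?_ ?_
              (hs_of_sub q.1 T (Or.inl hqT) (hl q hq))
            · intro k x hx hTx
              exact ⟨k, x, ingr_trans hx hqT, hmEq_refl x, hTx⟩
            · intro k x hx hTx
              exact ⟨k, x, ingr_trans hx hqT, hmEq_refl x, hTx⟩

end Stmt8Aux4


section Stmt8Final
variable {F : Type}

theorem ingrE_toU {j n : ℕ} {x : HMd F j} {t : HMd F n} (h : IngrE x t) : IngrU x t :=
  h.imp ingrS_of_ingr id

theorem isParentIn_unique {n : ℕ} {t : HMd F n} (ht : TreeLike F n t) {f q q' : F}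
    (h1 : IsParentIn t f q) (h2 : IsParentIn t f q') : q = q' := by
  obtain ⟨_, iR2, _, iU, iLOC, _⟩ := treeLike_inv ht
  obtain ⟨kq, xq, ⟨hIq, hTq, haq⟩, kf, xf, ⟨hIf, hTf, haf⟩, hlink⟩ := h1
  obtain ⟨kq', xq', ⟨hIq', hTq', haq'⟩, kf', xf', ⟨hIf', hTf', haf'⟩, hlink'⟩ := h2
  have hef : hmEq xf xf' := iU f kf kf' xf xf' (ingrE_toU hIf) (ingrE_toU hIf') haf haf'
  have hcnd : Cond xf := Or.inl ⟨f, haf⟩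
  rcases hlink with hd | ⟨kg, g, hg1, hg2, hg3⟩ <;>
    rcases hlink' with hd' | ⟨kg', g', hg1', hg2', hg3'⟩
  · have hd'' : MemUpTo xf xq' := (memUpTo_congr_left (hmEq_symm hef)).mp hd'
    have heq : hmEq xq xq' :=
      iLOC kf kq kq' xf xq xq' (ingrE_toU hIq) (ingrE_toU hIq') hd hd'' hcnd
    exact iR2 _ xq' (ingrE_toU hIq') q q'
      (by rw [← hmEq_acount heq q]; exact haq) haq'
  · exfalso
    have hg3'' : MemUpTo xf g' := (memUpTo_congr_left (hmEq_symm hef)).mp hg3'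
    have hgU : IngrU g' t := Or.inl (memUpTo_ingrS hg1' (ingrE_toU hIq'))
    have heq : hmEq xq g' := iLOC kf kq kg' xf xq g' (ingrE_toU hIq) hgU hd hg3'' hcnd
    have : (0:ℕ) < 0 := by
      rw [hmEq_acount heq q, noAtoms_acount hg2' q] at haq
      exact haq
    omega
  · exfalso
    have hg3'' : MemUpTo xf' g := (memUpTo_congr_left hef).mp hg3
    have hgU : IngrU g t := Or.inl (memUpTo_ingrS hg1 (ingrE_toU hIq))
    have heq : hmEq xq' g :=
      iLOC kf' kq' kg xf' xq' g (ingrE_toU hIq') hgU hd' hg3''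
        (Or.inl ⟨f, haf'⟩)
    have : (0:ℕ) < 0 := by
      rw [hmEq_acount heq q', noAtoms_acount hg2 q'] at haq'
      exact haq'
    omega
  · have hg3'' : MemUpTo xf g' := (memUpTo_congr_left (hmEq_symm hef)).mp hg3'
    have hgU : IngrU g t := Or.inl (memUpTo_ingrS hg1 (ingrE_toU hIq))
    have hgU' : IngrU g' t := Or.inl (memUpTo_ingrS hg1' (ingrE_toU hIq'))
    have hegg : hmEq g g' := iLOC kf kg kg' xf g g' hgU hgU' hg3 hg3'' hcnd
    have hg1'' : MemUpTo g xq' := (memUpTo_congr_left (hmEq_symm hegg)).mp hg1'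
    obtain ⟨y, hy, hye⟩ := hg3
    have hcndg : Cond g :=
      Or.inr ⟨f, kg, y, g, hmEq_refl g, hy, by rw [← hmEq_acount hye f]; exact haf⟩
    have heq : hmEq xq xq' :=
      iLOC (kg+1) kq kq' g xq xq' (ingrE_toU hIq) (ingrE_toU hIq') hg1 hg1'' hcndg
    exact iR2 _ xq' (ingrE_toU hIq') q q'
      (by rw [← hmEq_acount heq q]; exact haq) haq'

end Stmt8Final

/-- the parent function on a tree-like multiset is well-defined: every
non-root element of the flattened support has a unique parent. -/
theorem treelike_parent_well_defined (F : Type) (n : ℕ) (t : HMd F n)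
    (ht : TreeLike F n t) (f : F) (hf : f ∈ HMd.flat t) (hnr : HMd.acount f t = 0) :
    ∃ p, p ∈ HMd.flat t ∧ IsParentIn t f p ∧
      ∀ q, q ∈ HMd.flat t → IsParentIn t f q → q = p := by
  obtain ⟨_, _, _, _, _, iEX⟩ := treeLike_inv ht
  obtain ⟨p, hp, hpar⟩ := iEX f hf hnr
  exact ⟨p, hp, hpar, fun q _ hq' => isParentIn_unique ht hq' hpar⟩



end
end CFDPaper
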